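/- arXiv:1506.01742 — 4 statements merged into one kernel-verified Lean document; each statement's English description precedes it below -/
import Mathlib

section
/- Let G be a snake graph with sign function f and let P be a perfect matching of G consisting only of boundary edges. If a and b are edges in P that are both north-or-east boundary edges, or both south-or-west boundary edges, then f(a) = f(b); if one of a, b is a north-or-east boundary edge in P and the other is a south-or-west boundary edge in P, then f(a) = -f(b). -/
/- Combinatorial model of abstract snake graphs and band graphs
   (Canakci–Schiffler, "Snake graph calculus III").
   Tiles are unit squares in the integer grid; a snake graph is a finite
   sequence of tiles, consecutive tiles glued north/south or east/west. -/

open scoped Classical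
open Finset

noncomputable section

abbrev GV := ℤ × ℤ
abbrev GE := Sym2 (ℤ × ℤ)

/-- the south edge of the unit tile whose south-west corner is `p` -/
def south (p : GV) : GE := s(p, p + (1, 0))
/-- the north edge of the unit tile whose south-west corner is `p` -/
def north (p : GV) : GE := s(p + (0, 1), p + (1, 1))
/-- the west edge of the unit tile whose south-west corner is `p` -/
def west (p : GV) : GE := s(p, p + (0, 1))
/-- the east edge of the unit tile whose south-west corner is `p` -/
def east (p : GV) : GE := s(p + (1, 0), p + (1, 1))

def tileVerts (p : GV) : Finset GV := {p, p + (1, 0), p + (0, 1), p + (1, 1)}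
def tileEdges (p : GV) : Finset GE := {south p, north p, west p, east p}

/-- An (abstract) snake graph: a sequence of `d ≥ 1` tiles in the plane,
each consecutive tile glued to the north or to the east of the previous one. -/
structure SnakeGraph where
  d : ℕ
  pos : ℕ → GV
  one_le : 1 ≤ d
  step : ∀ i, i + 1 < d →
    pos (i + 1) = pos i + (0, 1) ∨ pos (i + 1) = pos i + (1, 0)

namespace SnakeGraph
variable (G : SnakeGraph)

def verts : Finset GV := (Finset.range G.d).biUnion fun i => tileVerts (G.pos i)

def edges : Finset GE := (Finset.range G.d).biUnion fun i => tileEdges (G.pos i)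

/-- edges contained in two tiles -/
def interiorEdges : Finset GE := G.edges.filter fun e =>
  ∃ i < G.d, ∃ j < G.d, i ≠ j ∧ e ∈ tileEdges (G.pos i) ∧ e ∈ tileEdges (G.pos j)

def boundaryEdges : Finset GE := G.edges \ G.interiorEdges

/-- a perfect matching: a set of edges covering each vertex exactly once -/
def IsPerfectMatching (M : Finset GE) : Prop :=
  M ⊆ G.edges ∧ ∀ v ∈ G.verts, ∃! e, e ∈ M ∧ v ∈ e

/-- the (finite) set of all perfect matchings of `G` -/
def matchings : Finset (Finset GE) :=
  G.edges.powerset.filter fun M => G.IsPerfectMatching M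

/-- a sign function on the edges of `G` (`true` = `+`, `false` = `-`):
on every tile, north and west agree, south and east agree,
and north is opposite to south. -/
def IsSignFn (f : GE → Bool) : Prop :=
  ∀ i < G.d,
    f (north (G.pos i)) = f (west (G.pos i)) ∧
    f (south (G.pos i)) = f (east (G.pos i)) ∧
    f (north (G.pos i)) ≠ f (south (G.pos i))

/-- the interior edge shared by tiles `i` and `i+1` -/
def sharedEdge (i : ℕ) : GE :=
  if G.pos (i + 1) = G.pos i + (0, 1) then north (G.pos i) else east (G.pos i)

/-- north-or-east boundary edges -/
def NEset : Finset GE := G.boundaryEdges.filter fun e =>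
  ∃ i < G.d, e = north (G.pos i) ∨ e = east (G.pos i)

/-- south-or-west boundary edges -/
def SWset : Finset GE := G.boundaryEdges.filter fun e =>
  ∃ i < G.d, e = south (G.pos i) ∨ e = west (G.pos i)

end SnakeGraph

/-- the horizontal unit edge from `(a, j)` to `(a+1, j)` -/
def hEdge (a j : ℤ) : GE := s(((a, j) : GV), ((a + 1, j) : GV))

/-- Tile `i` is enclosed by the union of cycles `P ∆ Q`: the number of
horizontal edges of `P ∆ Q` lying in the column of tile `i` at height at most
the height of the tile is odd (a planar parity test). -/
def SnakeGraph.encl (G : SnakeGraph) (P Q : Finset GE) (i : ℕ) : Prop :=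
  Odd (((symmDiff P Q).filter fun e =>
    ∃ j : ℤ, j ≤ (G.pos i).2 ∧ e = hEdge (G.pos i).1 j)).card

/-- the rank (height) of a perfect matching `P` relative to the minimal matching `Q`:
the number of tiles enclosed by `P ∆ Q` -/
def SnakeGraph.rank (G : SnakeGraph) (Q P : Finset GE) : ℕ :=
  ((Finset.range G.d).filter fun i => G.encl P Q i).card

/-- The standard sign function on all grid edges; on every snake graph it
restricts to a sign function (the other one being its negation). -/
def stdSign : GE → Bool :=
  Sym2.lift ⟨fun u v =>
    if u.2 = v.2 then decide ((min u.1 v.1 + u.2) % 2 = 0)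
    else decide ((min u.1 v.1 + min u.2 v.2) % 2 = 1),
    by
      intro u v
      rcases eq_or_ne u.2 v.2 with h | h
      · simp [h, min_comm]
      · simp [h, Ne.symm h, min_comm]⟩

/-- An (abstract) band graph: a snake graph together with the choice of a
glueing edge `b` in the south-west of the first tile (`bSouth`) and of the
edge `b'` in the north-east of the last tile (`bNorth`), required to have the
same sign; the band graph itself is the quotient graph identifying `b` and
`b'` (see `glueMap`, `bandVerts`, `bandEdges` below). -/
structure BandGraph where
  G : SnakeGraph
  bSouth : Bool
  bNorth : Bool
  compat :
    stdSign (if bSouth then south (G.pos 0) else west (G.pos 0)) =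
      stdSign (if bNorth then north (G.pos (G.d - 1)) else east (G.pos (G.d - 1)))

namespace BandGraph
variable (B : BandGraph)

/-- the glueing edge `b` of the first tile -/
def bEdge : GE := if B.bSouth then south (B.G.pos 0) else west (B.G.pos 0)
/-- the glueing edge `b'` of the last tile -/
def bEdge' : GE := if B.bNorth then north (B.G.pos (B.G.d - 1)) else east (B.G.pos (B.G.d - 1))

/-- the south-west corner `x` of the first tile (an endpoint of `b`) -/
def xx : GV := B.G.pos 0
/-- the other endpoint `y` of `b` -/
def yy : GV := if B.bSouth then B.G.pos 0 + (1, 0) else B.G.pos 0 + (0, 1)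
/-- the north-east corner `y'` of the last tile (an endpoint of `b'`) -/
def yy' : GV := B.G.pos (B.G.d - 1) + (1, 1)
/-- the other endpoint `x'` of `b'` -/
def xx' : GV := if B.bNorth then B.G.pos (B.G.d - 1) + (0, 1) else B.G.pos (B.G.d - 1) + (1, 0)

def glueStep : GV → GV := fun z => if z = B.xx' then B.xx else if z = B.yy' then B.yy else z

/-- the identification `x' ↦ x`, `y' ↦ y` glueing the snake graph into the band graph -/
def glueMap : GV → GV := fun z => B.glueStep (B.glueStep z)

def bandVerts : Finset GV := B.G.verts.image B.glueMap
def bandEdges : Finset GE := B.G.edges.image (Sym2.map B.glueMap)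
/-- the glueing edge `b = b'` of the band graph -/
def glueEdge : GE := Sym2.map B.glueMap B.bEdge'
/-- the interior edges of the band graph: those of the snake graph plus the glueing edge -/
def bandInteriorEdges : Finset GE :=
  insert B.glueEdge (B.G.interiorEdges.image (Sym2.map B.glueMap))
def bandBoundaryEdges : Finset GE := B.bandEdges \ B.bandInteriorEdges

/-- perfect matchings of the band graph -/
def IsBandPM (M : Finset GE) : Prop :=
  M ⊆ B.bandEdges ∧ ∀ v ∈ B.bandVerts, ∃! e, e ∈ M ∧ v ∈ e

/-- good perfect matchings: those obtained by cutting the band graph along an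
interior edge, i.e. perfect matchings using at least one interior edge. -/
def IsGoodPM (M : Finset GE) : Prop :=
  B.IsBandPM M ∧ ∃ e ∈ B.bandInteriorEdges, e ∈ M

def goodMatchings : Finset (Finset GE) :=
  B.bandEdges.powerset.filter fun M => B.IsGoodPM M

/-- the rank of a good matching `P` relative to a base good matching `Q` -/
def rank (Q P : Finset GE) : ℕ :=
  ((Finset.range B.G.d).filter fun i => B.G.encl P Q i).card

/-- the number of interior edges of the band graph of sign `+` -/
def plusCount : ℕ :=
  ((Finset.range (B.G.d - 1)).filter fun i => stdSign (B.G.sharedEdge i) = true).card +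
    (if stdSign B.bEdge = true then 1 else 0)

/-- the number of interior edges of the band graph of sign `-` -/
def minusCount : ℕ :=
  ((Finset.range (B.G.d - 1)).filter fun i => stdSign (B.G.sharedEdge i) = false).card +
    (if stdSign B.bEdge = false then 1 else 0)

end BandGraph

namespace SnakeSign

def mV (G : SnakeGraph) (j : ℕ) (b : Bool) : GV :=
  if b then G.pos j + (1, 0) else G.pos j + (0, 1)

def DD (G : SnakeGraph) : ℕ → Bool → GE
  | 0, b => if b then south (G.pos 0) else west (G.pos 0)
  | (j+1), b =>
      if G.pos (j+1) = G.pos j + (0, 1) then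
        (if b then east (G.pos j) else west (G.pos (j+1)))
      else
        (if b then south (G.pos (j+1)) else north (G.pos j))

def UU (G : SnakeGraph) (b : Bool) : GE :=
  if b then east (G.pos (G.d - 1)) else north (G.pos (G.d - 1))

def sig (v : GV) : ℤ := v.1 + v.2

lemma DD_north (G : SnakeGraph) {j : ℕ} (h : G.pos (j+1) = G.pos j + (0,1)) (b : Bool) :
    DD G (j+1) b = if b then east (G.pos j) else west (G.pos (j+1)) := by
  simp [DD, h]

lemma DD_east (G : SnakeGraph) {j : ℕ} (h : G.pos (j+1) = G.pos j + (1,0)) (b : Bool) :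
    DD G (j+1) b = if b then south (G.pos (j+1)) else north (G.pos j) := by
  have hne : ¬ (G.pos (j+1) = G.pos j + (0,1)) := by
    rw [h]; intro hc
    have := add_left_cancel hc
    simp [Prod.ext_iff] at this
  simp [DD, hne]

lemma south_shift (p : GV) : south (p + (0,1)) = north p := by
  have h : p + (0,1) + (1,0) = p + (1,1) := by simp [Prod.ext_iff]
  rw [south, north, h]

lemma west_shift (p : GV) : west (p + (1,0)) = east p := by
  have h : p + (1,0) + (0,1) = p + (1,1) := by simp [Prod.ext_iff]
  rw [west, east, h]

lemma sig_pos (G : SnakeGraph) : ∀ j, j < G.d → sig (G.pos j) = sig (G.pos 0) + j := by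
  intro j
  induction j with
  | zero => intro _; simp
  | succ n ih =>
    intro h
    have h2 := ih (by omega)
    rcases G.step n h with hs | hs <;>
      simp [hs, sig, Prod.fst_add, Prod.snd_add] at h2 ⊢ <;> push_cast <;> omega

lemma sig_of_tile {v p : GV} (h : v ∈ tileVerts p) : sig p ≤ sig v ∧ sig v ≤ sig p + 2 := by
  simp [tileVerts] at h
  rcases h with rfl|rfl|rfl|rfl <;> simp [sig, Prod.fst_add, Prod.snd_add] <;> omega

lemma sig_mV (G : SnakeGraph) (j : ℕ) (b : Bool) : sig (mV G j b) = sig (G.pos j) + 1 := by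
  cases b <;> simp [mV, sig, Prod.fst_add, Prod.snd_add] <;> omega

lemma mem_tileVerts_of_edge {p : GV} {e : GE} (he : e ∈ tileEdges p) {v : GV} (hv : v ∈ e) :
    v ∈ tileVerts p := by
  simp [tileEdges] at he
  rcases he with h|h|h|h <;> subst h <;>
    simp [south, north, west, east, Sym2.mem_iff] at hv <;>
    rcases hv with h|h <;> simp [tileVerts, h]

lemma tile_of_edge (G : SnakeGraph) {e : GE} (he : e ∈ G.edges) :
    ∃ i, i < G.d ∧ e ∈ tileEdges (G.pos i) := by
  obtain ⟨i, hi, h⟩ := Finset.mem_biUnion.mp he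
  exact ⟨i, Finset.mem_range.mp hi, h⟩

lemma mem_verts_of_tile (G : SnakeGraph) {v : GV} {i : ℕ} (h : v ∈ tileVerts (G.pos i))
    (hi : i < G.d) : v ∈ G.verts :=
  Finset.mem_biUnion.mpr ⟨i, Finset.mem_range.mpr hi, h⟩

lemma mV_mem_tileVerts (G : SnakeGraph) (j : ℕ) (b : Bool) : mV G j b ∈ tileVerts (G.pos j) := by
  cases b <;> simp [mV, tileVerts]

lemma cover_unique (G : SnakeGraph) (P : Finset GE) (hP : G.IsPerfectMatching P) {v : GV}
    (hv : v ∈ G.verts) {e1 e2 : GE} (h1 : e1 ∈ P) (hv1 : v ∈ e1) (h2 : e2 ∈ P) (hv2 : v ∈ e2) :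
    e1 = e2 := by
  obtain ⟨e, -, hu⟩ := hP.2 v hv
  rw [hu e1 ⟨h1, hv1⟩, hu e2 ⟨h2, hv2⟩]

lemma eq_tile_of_boundary (G : SnakeGraph) {a : GE} (hbd : a ∈ G.boundaryEdges) {i i' : ℕ}
    (hi : i < G.d) (hi' : i' < G.d)
    (h1 : a ∈ tileEdges (G.pos i)) (h2 : a ∈ tileEdges (G.pos i')) : i = i' := by
  by_contra hne
  rw [SnakeGraph.boundaryEdges, Finset.mem_sdiff] at hbd
  exact hbd.2 (Finset.mem_filter.mpr ⟨hbd.1, i, hi, i', hi', hne, h1, h2⟩)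

lemma not_mem_P_of_interior (G : SnakeGraph) (P : Finset GE) (hPb : P ⊆ G.boundaryEdges)
    {e : GE} (he : e ∈ G.interiorEdges) : e ∉ P := by
  intro h
  have := hPb h
  rw [SnakeGraph.boundaryEdges, Finset.mem_sdiff] at this
  exact this.2 he

lemma mem_edges_of_tile (G : SnakeGraph) {e : GE} {i : ℕ} (h : e ∈ tileEdges (G.pos i))
    (hi : i < G.d) : e ∈ G.edges :=
  Finset.mem_biUnion.mpr ⟨i, Finset.mem_range.mpr hi, h⟩

lemma sharedN (G : SnakeGraph) {j : ℕ} (hj : j + 1 < G.d) (h : G.pos (j+1) = G.pos j + (0,1)) :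
    north (G.pos j) ∈ G.interiorEdges := by
  have hm1 : north (G.pos j) ∈ tileEdges (G.pos j) := by simp [tileEdges]
  have hm2 : north (G.pos j) ∈ tileEdges (G.pos (j+1)) := by
    rw [h, ← south_shift]; simp [tileEdges]
  exact Finset.mem_filter.mpr ⟨mem_edges_of_tile G hm1 (by omega), j, by omega, j+1, hj, by omega, hm1, hm2⟩

lemma sharedE (G : SnakeGraph) {j : ℕ} (hj : j + 1 < G.d) (h : G.pos (j+1) = G.pos j + (1,0)) :
    east (G.pos j) ∈ G.interiorEdges := by
  have hm1 : east (G.pos j) ∈ tileEdges (G.pos j) := by simp [tileEdges]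
  have hm2 : east (G.pos j) ∈ tileEdges (G.pos (j+1)) := by
    rw [h, ← west_shift]; simp [tileEdges]
  exact Finset.mem_filter.mpr ⟨mem_edges_of_tile G hm1 (by omega), j, by omega, j+1, hj, by omega, hm1, hm2⟩

lemma mem_DD_top (G : SnakeGraph) {j : ℕ} (hj : j < G.d) (b : Bool) : mV G j b ∈ DD G j b := by
  match j with
  | 0 => cases b <;> simp [DD, mV, south, west, Sym2.mem_iff]
  | (n+1) =>
    rcases G.step n hj with hs | hs
    · rw [DD_north G hs]
      cases b <;> simp [mV, east, west, Sym2.mem_iff, hs, Prod.ext_iff] <;> omega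
    · rw [DD_east G hs]
      cases b <;> simp [mV, south, north, Sym2.mem_iff, hs, Prod.ext_iff] <;> omega

lemma mem_DD_bot (G : SnakeGraph) {j : ℕ} (hj : j + 1 < G.d) (b : Bool) :
    mV G j b ∈ DD G (j+1) b := by
  rcases G.step j hj with hs | hs
  · rw [DD_north G hs]
    cases b <;> simp [mV, east, west, Sym2.mem_iff, hs, Prod.ext_iff] <;> omega
  · rw [DD_east G hs]
    cases b <;> simp [mV, south, north, Sym2.mem_iff, hs, Prod.ext_iff] <;> omega

lemma mem_DD_zero (G : SnakeGraph) (b : Bool) : G.pos 0 ∈ DD G 0 b := by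
  cases b <;> simp [DD, south, west, Sym2.mem_iff]

lemma mem_UU_top (G : SnakeGraph) (b : Bool) : G.pos (G.d - 1) + (1,1) ∈ UU G b := by
  cases b <;> simp [UU, east, north, Sym2.mem_iff, Prod.ext_iff] <;> omega

lemma mem_UU_bot (G : SnakeGraph) (b : Bool) : mV G (G.d - 1) b ∈ UU G b := by
  cases b <;> simp [UU, mV, east, north, Sym2.mem_iff, Prod.ext_iff]

lemma DD_sig (G : SnakeGraph) {j : ℕ} (hj : j < G.d) (b : Bool) {v : GV} (hv : v ∈ DD G j b) :
    sig v ≤ sig (G.pos j) + 1 := by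
  match j with
  | 0 =>
    cases b <;> simp [DD, south, west, Sym2.mem_iff] at hv <;>
      rcases hv with rfl|rfl <;> simp [sig, Prod.fst_add, Prod.snd_add] <;> omega
  | (n+1) =>
    rcases G.step n hj with hs | hs
    · rw [DD_north G hs] at hv
      cases b <;> simp [east, west, Sym2.mem_iff] at hv <;>
        rcases hv with rfl|rfl <;> simp [sig, hs, Prod.fst_add, Prod.snd_add] <;> omega
    · rw [DD_east G hs] at hv
      cases b <;> simp [south, north, Sym2.mem_iff] at hv <;>
        rcases hv with rfl|rfl <;> simp [sig, hs, Prod.fst_add, Prod.snd_add] <;> omega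

lemma fN_eq (G : SnakeGraph) (f : GE → Bool) (hf : G.IsSignFn f) {j : ℕ} (hj : j < G.d) :
    f (north (G.pos j)) = !f (south (G.pos j)) := by
  obtain ⟨-, -, h3⟩ := hf j hj
  revert h3
  cases f (north (G.pos j)) <;> cases f (south (G.pos j)) <;> simp

lemma fW_eq (G : SnakeGraph) (f : GE → Bool) (hf : G.IsSignFn f) {j : ℕ} (hj : j < G.d) :
    f (west (G.pos j)) = !f (south (G.pos j)) := by
  obtain ⟨h1, -, -⟩ := hf j hj
  rw [← h1]; exact fN_eq G f hf hj

lemma fE_eq (G : SnakeGraph) (f : GE → Bool) (hf : G.IsSignFn f) {j : ℕ} (hj : j < G.d) :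
    f (east (G.pos j)) = f (south (G.pos j)) :=
  ((hf j hj).2.1).symm

lemma sg_succ (G : SnakeGraph) (f : GE → Bool) (hf : G.IsSignFn f) {j : ℕ} (hj : j + 1 < G.d) :
    f (south (G.pos (j+1))) = !f (south (G.pos j)) := by
  rcases G.step j hj with hs | hs
  · rw [show south (G.pos (j+1)) = north (G.pos j) from by rw [hs, south_shift]]
    exact fN_eq G f hf (by omega)
  · have h1 := fW_eq G f hf hj
    rw [show west (G.pos (j+1)) = east (G.pos j) from by rw [hs, west_shift],
      fE_eq G f hf (by omega)] at h1
    revert h1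
    cases f (south (G.pos (j+1))) <;> cases f (south (G.pos j)) <;> decide

lemma base_case (G : SnakeGraph) (P : Finset GE) (hP : G.IsPerfectMatching P) :
    ∃ ε : Bool, DD G 0 ε ∈ P ∧ DD G 0 (!ε) ∉ P := by
  have h0 : (0:ℕ) < G.d := G.one_le
  have hv : G.pos 0 ∈ G.verts := mem_verts_of_tile G (by simp [tileVerts]) h0
  obtain ⟨e, ⟨heP, hev⟩, hu⟩ := hP.2 _ hv
  obtain ⟨i, hi, hei⟩ := tile_of_edge G (hP.1 heP)
  have hsv := sig_of_tile (mem_tileVerts_of_edge hei hev)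
  have hsi := sig_pos G i hi
  have hizero : i = 0 := by omega
  subst hizero
  simp only [tileEdges, Finset.mem_insert, Finset.mem_singleton] at hei
  have he' : e = south (G.pos 0) ∨ e = west (G.pos 0) := by
    rcases hei with rfl|rfl|rfl|rfl
    · left; rfl
    · exfalso; simp [north, Sym2.mem_iff, Prod.ext_iff] at hev
    · right; rfl
    · exfalso; simp [east, Sym2.mem_iff, Prod.ext_iff] at hev
  rcases he' with rfl | rfl
  · refine ⟨true, by simpa [DD] using heP, ?_⟩
    intro hcon
    have h2 : DD G 0 (!true) = west (G.pos 0) := by simp [DD]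
    rw [h2] at hcon
    have := hu (west (G.pos 0)) ⟨hcon, by simp [west, Sym2.mem_iff]⟩
    simp [west, south, Sym2.eq_iff, Prod.ext_iff] at this
  · refine ⟨false, by simpa [DD] using heP, ?_⟩
    intro hcon
    have h2 : DD G 0 (!false) = south (G.pos 0) := by simp [DD]
    rw [h2] at hcon
    have := hu (south (G.pos 0)) ⟨hcon, by simp [south, Sym2.mem_iff]⟩
    simp [west, south, Sym2.eq_iff, Prod.ext_iff] at this

lemma cover_of_mid (G : SnakeGraph) (P : Finset GE)
    (hP : G.IsPerfectMatching P) (hPb : P ⊆ G.boundaryEdges)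
    {j : ℕ} (hj : j < G.d) {ε : Bool}
    (h1 : DD G j ε ∈ P) (h2 : DD G j (!ε) ∉ P)
    {e : GE} (heP : e ∈ P) (hev : mV G j (!ε) ∈ e) :
    e = if j + 1 < G.d then DD G (j+1) (!ε) else UU G (!ε) := by
  have hd1 := G.one_le
  obtain ⟨i, hi, hei⟩ := tile_of_edge G (hP.1 heP)
  have hsv := sig_of_tile (mem_tileVerts_of_edge hei hev)
  have hsi := sig_pos G i hi
  have hsj := sig_pos G j hj
  have hsmv := sig_mV G j (!ε)
  have hir : i + 1 = j ∨ i = j ∨ i = j + 1 := by omega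
  simp only [tileEdges, Finset.mem_insert, Finset.mem_singleton] at hei
  rcases hir with hA | hB | hC
  -- Branch A : i + 1 = j
  · exfalso
    subst hA
    rcases G.step i hj with hs | hs
    · -- north step from tile i to tile i+1
      rcases hei with rfl|rfl|rfl|rfl
      · cases ε <;> simp [mV, south, hs, Sym2.mem_iff, Prod.ext_iff] at hev <;> omega
      · cases ε
        · exact not_mem_P_of_interior G P hPb (sharedN G hj hs) heP
        · simp [mV, north, hs, Sym2.mem_iff, Prod.ext_iff] at hev
      · cases ε <;> simp [mV, west, hs, Sym2.mem_iff, Prod.ext_iff] at hev <;> omega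
      · cases ε
        · exact h2 (by rw [DD_north G hs]; simpa using heP)
        · simp [mV, east, hs, Sym2.mem_iff, Prod.ext_iff] at hev
    · -- east step from tile i to tile i+1
      rcases hei with rfl|rfl|rfl|rfl
      · cases ε <;> simp [mV, south, hs, Sym2.mem_iff, Prod.ext_iff] at hev <;> omega
      · cases ε
        · simp [mV, north, hs, Sym2.mem_iff, Prod.ext_iff] at hev
        · exact h2 (by rw [DD_east G hs]; simpa using heP)
      · cases ε <;> simp [mV, west, hs, Sym2.mem_iff, Prod.ext_iff] at hev <;> omega
      · cases ε
        · simp [mV, east, hs, Sym2.mem_iff, Prod.ext_iff] at hev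
        · exact not_mem_P_of_interior G P hPb (sharedE G hj hs) heP
  -- Branch B : i = j (after subst, everything in terms of i)
  · subst hB
    rcases hei with rfl|rfl|rfl|rfl
    · -- e = south (G.pos i)
      cases ε
      · exfalso
        cases i with
        | zero => exact h2 (by simpa [DD] using heP)
        | succ n =>
          rcases G.step n (by omega) with hs | hs
          · rw [show south (G.pos (n+1)) = north (G.pos n) from by rw [hs, south_shift]] at heP
            exact not_mem_P_of_interior G P hPb (sharedN G (by omega) hs) heP
          · exact h2 (by rw [DD_east G hs]; simpa using heP)
      · exfalso; simp [mV, south, Sym2.mem_iff, Prod.ext_iff] at hev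
    · -- e = north (G.pos i)
      cases ε
      · exfalso; simp [mV, north, Sym2.mem_iff, Prod.ext_iff] at hev
      · by_cases hlt : i + 1 < G.d
        · rcases G.step i hlt with hs | hs
          · exact absurd heP (not_mem_P_of_interior G P hPb (sharedN G hlt hs))
          · rw [if_pos hlt, DD_east G hs]; simp
        · rw [if_neg hlt]
          have hdj : i = G.d - 1 := by omega
          subst hdj
          simp [UU]
    · -- e = west (G.pos i)
      cases ε
      · exfalso; simp [mV, west, Sym2.mem_iff, Prod.ext_iff] at hev
      · exfalso
        cases i with
        | zero => exact h2 (by simpa [DD] using heP)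
        | succ n =>
          rcases G.step n (by omega) with hs | hs
          · exact h2 (by rw [DD_north G hs]; simpa using heP)
          · have h1' : south (G.pos (n+1)) ∈ P := by
              rw [DD_east G hs] at h1; simpa using h1
            have hvv : G.pos (n+1) ∈ G.verts :=
              mem_verts_of_tile G (v := G.pos (n+1)) (i := n+1) (by simp [tileVerts]) hj
            have hq := cover_unique G P hP (v := G.pos (n+1)) hvv heP
              (by simp [west, Sym2.mem_iff]) h1' (by simp [south, Sym2.mem_iff])
            simp [west, south, Sym2.eq_iff, Prod.ext_iff] at hq
    · -- e = east (G.pos i)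
      cases ε
      · by_cases hlt : i + 1 < G.d
        · rcases G.step i hlt with hs | hs
          · rw [if_pos hlt, DD_north G hs]; simp
          · exact absurd heP (not_mem_P_of_interior G P hPb (sharedE G hlt hs))
        · rw [if_neg hlt]
          have hdj : i = G.d - 1 := by omega
          subst hdj
          simp [UU]
      · exfalso; simp [mV, east, Sym2.mem_iff, Prod.ext_iff] at hev
  -- Branch C : i = j + 1
  · subst hC
    rcases G.step j hi with hs | hs
    · -- north step from tile j to tile j+1
      cases ε
      · exfalso
        rcases hei with rfl|rfl|rfl|rfl <;>
          simp [mV, south, north, west, east, hs, Sym2.mem_iff, Prod.ext_iff] at hev <;> omega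
      · rcases hei with rfl|rfl|rfl|rfl
        · exfalso
          rw [show south (G.pos (j+1)) = north (G.pos j) from by rw [hs, south_shift]] at heP
          exact absurd heP (not_mem_P_of_interior G P hPb (sharedN G hi hs))
        · exfalso; simp [mV, north, hs, Sym2.mem_iff, Prod.ext_iff] at hev
        · rw [if_pos hi, DD_north G hs]; simp
        · exfalso; simp [mV, east, hs, Sym2.mem_iff, Prod.ext_iff] at hev
    · -- east step from tile j to tile j+1
      cases ε
      · rcases hei with rfl|rfl|rfl|rfl
        · rw [if_pos hi, DD_east G hs]; simp
        · exfalso; simp [mV, north, hs, Sym2.mem_iff, Prod.ext_iff] at hev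
        · exfalso
          rw [show west (G.pos (j+1)) = east (G.pos j) from by rw [hs, west_shift]] at heP
          exact absurd heP (not_mem_P_of_interior G P hPb (sharedE G hi hs))
        · exfalso; simp [mV, east, hs, Sym2.mem_iff, Prod.ext_iff] at hev
      · exfalso
        rcases hei with rfl|rfl|rfl|rfl <;>
          simp [mV, south, north, west, east, hs, Sym2.mem_iff, Prod.ext_iff] at hev <;> omega

lemma notNE (G : SnakeGraph) {a : GE} {i : ℕ} (hi : i < G.d) (hbd : a ∈ G.boundaryEdges)
    (h : a = south (G.pos i) ∨ a = west (G.pos i)) : a ∉ G.NEset := by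
  intro hne
  rw [SnakeGraph.NEset, Finset.mem_filter] at hne
  obtain ⟨i', hi', h'⟩ := hne.2
  have hT : a ∈ tileEdges (G.pos i) := by rcases h with rfl|rfl <;> simp [tileEdges]
  have hT' : a ∈ tileEdges (G.pos i') := by rcases h' with rfl|rfl <;> simp [tileEdges]
  have : i = i' := eq_tile_of_boundary G hbd hi hi' hT hT'
  subst this
  rcases h with rfl|rfl <;>
    rcases h' with h'|h' <;>
      simp [south, west, north, east, Sym2.eq_iff, Prod.ext_iff] at h' <;> omega

lemma notSW (G : SnakeGraph) {a : GE} {i : ℕ} (hi : i < G.d) (hbd : a ∈ G.boundaryEdges)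
    (h : a = north (G.pos i) ∨ a = east (G.pos i)) : a ∉ G.SWset := by
  intro hne
  rw [SnakeGraph.SWset, Finset.mem_filter] at hne
  obtain ⟨i', hi', h'⟩ := hne.2
  have hT : a ∈ tileEdges (G.pos i) := by rcases h with rfl|rfl <;> simp [tileEdges]
  have hT' : a ∈ tileEdges (G.pos i') := by rcases h' with rfl|rfl <;> simp [tileEdges]
  have : i = i' := eq_tile_of_boundary G hbd hi hi' hT hT'
  subst this
  rcases h with rfl|rfl <;>
    rcases h' with h'|h' <;>
      simp [south, west, north, east, Sym2.eq_iff, Prod.ext_iff] at h' <;> omega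

lemma master (G : SnakeGraph) (f : GE → Bool) (hf : G.IsSignFn f) (P : Finset GE)
    (hP : G.IsPerfectMatching P) (hPb : P ⊆ G.boundaryEdges) :
    ∃ κ : Bool, ∀ a ∈ P, (a ∈ G.NEset → f a = κ) ∧ (a ∈ G.SWset → f a = !κ) := by
  have hd1 := G.one_le
  obtain ⟨ε₀, hb1, hb2⟩ := base_case G P hP
  obtain ⟨κ, hκ0⟩ : ∃ κ : Bool, f (south (G.pos 0)) = (ε₀ != κ) :=
    ⟨ε₀ != f (south (G.pos 0)), by cases ε₀ <;> cases f (south (G.pos 0)) <;> rfl⟩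
  refine ⟨κ, ?_⟩
  have hQ : ∀ j, j < G.d → ∃ ε : Bool, DD G j ε ∈ P ∧ DD G j (!ε) ∉ P ∧
      f (south (G.pos j)) = (ε != κ) := by
    intro j
    induction j with
    | zero => exact fun _ => ⟨ε₀, hb1, hb2, hκ0⟩
    | succ n ih =>
      intro hn
      obtain ⟨ε, q1, q2, q3⟩ := ih (by omega)
      have hvV : mV G n (!ε) ∈ G.verts :=
        mem_verts_of_tile G (mV_mem_tileVerts G n (!ε)) (by omega)
      obtain ⟨e, ⟨heP, hev⟩, -⟩ := hP.2 _ hvV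
      have hcov := cover_of_mid G P hP hPb (by omega : n < G.d) q1 q2 heP hev
      rw [if_pos hn] at hcov
      subst hcov
      refine ⟨!ε, heP, ?_, ?_⟩
      · simp only [Bool.not_not]
        intro hcon
        have hvV2 : mV G n ε ∈ G.verts :=
          mem_verts_of_tile G (mV_mem_tileVerts G n ε) (by omega)
        have heq := cover_unique G P hP hvV2 hcon (mem_DD_bot G hn ε) q1
          (mem_DD_top G (by omega) ε)
        have h3 : mV G (n+1) ε ∈ DD G n ε := by rw [← heq]; exact mem_DD_top G hn ε
        have h4 := DD_sig G (by omega : n < G.d) ε h3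
        have h5 := sig_mV G (n+1) ε
        have h6 := sig_pos G n (by omega)
        have h7 := sig_pos G (n+1) hn
        omega
      · rw [sg_succ G f hf hn, q3]; cases ε <;> cases κ <;> rfl
  have cov : ∀ j, j < G.d → ∀ b : Bool, ∀ e ∈ P, mV G j b ∈ e →
      (∃ j', j' < G.d ∧ ∃ ε : Bool, e = DD G j' ε ∧ f (south (G.pos j')) = (ε != κ)) ∨
      (∃ ε : Bool, e = UU G (!ε) ∧ f (south (G.pos (G.d - 1))) = (ε != κ)) := by
    intro j hj b e heP hev
    obtain ⟨ε, q1, q2, q3⟩ := hQ j hj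
    by_cases hbe : b = ε
    · subst hbe
      left
      refine ⟨j, hj, b, ?_, q3⟩
      exact cover_unique G P hP (mem_verts_of_tile G (mV_mem_tileVerts G j b) hj)
        heP hev q1 (mem_DD_top G hj b)
    · have hbe' : b = !ε := by cases b <;> cases ε <;> simp_all
      subst hbe'
      have hcov := cover_of_mid G P hP hPb hj q1 q2 heP hev
      by_cases hlt : j + 1 < G.d
      · rw [if_pos hlt] at hcov
        left
        refine ⟨j+1, hlt, !ε, hcov, ?_⟩
        rw [sg_succ G f hf hlt, q3]; cases ε <;> cases κ <;> rfl
      · rw [if_neg hlt] at hcov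
        right
        have hd : j = G.d - 1 := by omega
        exact ⟨ε, hcov, by rw [hd] at q3; exact q3⟩
  have key : ∀ a ∈ P,
      (∃ j', j' < G.d ∧ ∃ ε : Bool, a = DD G j' ε ∧ f (south (G.pos j')) = (ε != κ)) ∨
      (∃ ε : Bool, a = UU G (!ε) ∧ f (south (G.pos (G.d - 1))) = (ε != κ)) := by
    intro a ha
    induction a using Sym2.ind with
    | _ x y =>
    have hx : x ∈ s(x, y) := Sym2.mem_mk_left x y
    obtain ⟨i, hi, hei⟩ := tile_of_edge G (hP.1 ha)
    have hxT := mem_tileVerts_of_edge hei hx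
    simp only [tileVerts, Finset.mem_insert, Finset.mem_singleton] at hxT
    rcases hxT with hx0 | hx1 | hx2 | hx3
    · -- x = pos i
      cases i with
      | zero =>
        obtain ⟨ε, q1, q2, q3⟩ := hQ 0 (by omega)
        left
        refine ⟨0, by omega, ε, ?_, q3⟩
        exact cover_unique G P hP
          (mem_verts_of_tile G (v := G.pos 0) (i := 0) (by simp [tileVerts]) (by omega))
          ha (by rw [← hx0]; exact hx) q1 (mem_DD_zero G ε)
      | succ n =>
        rcases G.step n hi with hs | hs
        · refine cov n (by omega) false _ ha ?_
          rw [show mV G n false = x from by simp [mV, hx0, hs]]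
          exact hx
        · refine cov n (by omega) true _ ha ?_
          rw [show mV G n true = x from by simp [mV, hx0, hs]]
          exact hx
    · refine cov i hi true _ ha ?_
      rw [show mV G i true = x from by simp [mV, hx1]]
      exact hx
    · refine cov i hi false _ ha ?_
      rw [show mV G i false = x from by simp [mV, hx2]]
      exact hx
    · -- x = pos i + (1,1)
      by_cases hlt : i + 1 < G.d
      · rcases G.step i hlt with hs | hs
        · refine cov (i+1) hlt true _ ha ?_
          rw [show mV G (i+1) true = x from by
            simp [mV, hx3, hs, Prod.ext_iff] <;> omega]
          exact hx
        · refine cov (i+1) hlt false _ ha ?_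
          rw [show mV G (i+1) false = x from by
            simp [mV, hx3, hs, Prod.ext_iff] <;> omega]
          exact hx
      · have hd : i = G.d - 1 := by omega
        subst hd
        obtain ⟨ε, q1, q2, q3⟩ := hQ (G.d - 1) (by omega)
        have hvV : mV G (G.d - 1) (!ε) ∈ G.verts :=
          mem_verts_of_tile G (mV_mem_tileVerts G (G.d - 1) (!ε)) (by omega)
        obtain ⟨e, ⟨heP, hev⟩, -⟩ := hP.2 _ hvV
        have hcov := cover_of_mid G P hP hPb (by omega : G.d - 1 < G.d) q1 q2 heP hev
        rw [if_neg (by omega)] at hcov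
        subst hcov
        right
        refine ⟨ε, ?_, q3⟩
        exact cover_unique G P hP
          (mem_verts_of_tile G (v := G.pos (G.d - 1) + (1,1)) (i := G.d - 1)
            (by simp [tileVerts]) (by omega))
          ha (by rw [← hx3]; exact hx) heP (mem_UU_top G (!ε))
  -- final sign computation
  intro a ha
  have hbd := hPb ha
  rcases key a ha with ⟨j, hj, ε, rfl, hsg⟩ | ⟨ε, rfl, hsg⟩
  · cases j with
    | zero =>
      cases ε
      · have hdd : DD G 0 false = west (G.pos 0) := by simp [DD]
        rw [hdd] at hbd ⊢
        constructor
        · intro hne; exact absurd hne (notNE G (by omega) hbd (Or.inr rfl))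
        · intro _
          rw [fW_eq G f hf (show 0 < G.d by omega), hsg]; cases κ <;> rfl
      · have hdd : DD G 0 true = south (G.pos 0) := by simp [DD]
        rw [hdd] at hbd ⊢
        constructor
        · intro hne; exact absurd hne (notNE G (by omega) hbd (Or.inl rfl))
        · intro _; rw [hsg]; cases κ <;> rfl
    | succ n =>
      have hn1 : n + 1 < G.d := hj
      rcases G.step n hn1 with hs | hs
      · cases ε
        · have hdd : DD G (n+1) false = west (G.pos (n+1)) := by simp [DD_north G hs]
          rw [hdd] at hbd ⊢
          constructor
          · intro hne; exact absurd hne (notNE G hn1 hbd (Or.inr rfl))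
          · intro _; rw [fW_eq G f hf hn1, hsg]; cases κ <;> rfl
        · have hdd : DD G (n+1) true = east (G.pos n) := by simp [DD_north G hs]
          rw [hdd] at hbd ⊢
          constructor
          · intro _
            rw [fE_eq G f hf (by omega)]
            have hss := sg_succ G f hf hn1
            rw [hsg] at hss
            revert hss; cases κ <;> cases f (south (G.pos n)) <;> decide
          · intro hsw; exact absurd hsw (notSW G (by omega : n < G.d) hbd (Or.inr rfl))
      · cases ε
        · have hdd : DD G (n+1) false = north (G.pos n) := by simp [DD_east G hs]
          rw [hdd] at hbd ⊢
          constructor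
          · intro _
            rw [fN_eq G f hf (by omega)]
            have hss := sg_succ G f hf hn1
            rw [hsg] at hss
            revert hss; cases κ <;> cases f (south (G.pos n)) <;> decide
          · intro hsw; exact absurd hsw (notSW G (by omega : n < G.d) hbd (Or.inl rfl))
        · have hdd : DD G (n+1) true = south (G.pos (n+1)) := by simp [DD_east G hs]
          rw [hdd] at hbd ⊢
          constructor
          · intro hne; exact absurd hne (notNE G hn1 hbd (Or.inl rfl))
          · intro _; rw [hsg]; cases κ <;> rfl
  · cases ε
    · have hdd : UU G (!false) = east (G.pos (G.d - 1)) := by simp [UU]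
      rw [hdd] at hbd ⊢
      constructor
      · intro _
        rw [fE_eq G f hf (by omega), hsg]; cases κ <;> rfl
      · intro hsw; exact absurd hsw (notSW G (by omega : G.d - 1 < G.d) hbd (Or.inr rfl))
    · have hdd : UU G (!true) = north (G.pos (G.d - 1)) := by simp [UU]
      rw [hdd] at hbd ⊢
      constructor
      · intro _
        rw [fN_eq G f hf (by omega), hsg]; cases κ <;> rfl
      · intro hsw; exact absurd hsw (notSW G (by omega : G.d - 1 < G.d) hbd (Or.inl rfl))

end SnakeSign

/-- for a boundary perfect matching `P` and a sign function `f`: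
two edges of `P` both in NE or both in SW have the same sign; one in NE and
one in SW have opposite signs. -/
theorem sign_on_boundary_matching (G : SnakeGraph) (f : GE → Bool)
    (hf : G.IsSignFn f) (P : Finset GE) (hP : G.IsPerfectMatching P)
    (hPb : P ⊆ G.boundaryEdges) (a b : GE) (ha : a ∈ P) (hb : b ∈ P) :
    (((a ∈ G.NEset ∧ b ∈ G.NEset) ∨ (a ∈ G.SWset ∧ b ∈ G.SWset)) → f a = f b) ∧
    ((a ∈ G.NEset ∧ b ∈ G.SWset) → f a ≠ f b) := by
  obtain ⟨κ, hκ⟩ := SnakeSign.master G f hf P hP hPb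
  constructor
  · rintro (⟨haNE, hbNE⟩ | ⟨haSW, hbSW⟩)
    · rw [(hκ a ha).1 haNE, (hκ b hb).1 hbNE]
    · rw [(hκ a ha).2 haSW, (hκ b hb).2 hbSW]
  · rintro ⟨haNE, hbSW⟩
    rw [(hκ a ha).1 haNE, (hκ b hb).2 hbSW]
    cases κ <;> decide
end
end

section
/- For a band graph G° obtained from a snake graph by glueing, every good perfect matching of G° has exactly d edges, where d is the number of tiles of G°. -/
/- Combinatorial model of abstract snake graphs and band graphs
   (Canakci–Schiffler, "Snake graph calculus III").
   Tiles are unit squares in the integer grid; a snake graph is a finite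
   sequence of tiles, consecutive tiles glued north/south or east/west. -/

open scoped Classical
open Finset

noncomputable section

/-! ### Auxiliary lemmas -/

def efin : GE → Finset GV := Sym2.lift ⟨fun a b => {a, b}, fun a b => Finset.pair_comm a b⟩

lemma efin_pair (a b : GV) : efin s(a,b) = {a,b} := rfl

lemma mem_efin {v : GV} {e : GE} : v ∈ efin e ↔ v ∈ e := by
  induction e using Sym2.inductionOn with
  | hf a b => simp [efin_pair, Sym2.mem_iff]

lemma card_efin {e : GE} (h : ¬ e.IsDiag) : (efin e).card = 2 := by
  induction e using Sym2.inductionOn with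
  | hf a b => rw [Sym2.isDiag_iff_proj_eq] at h; simp [efin_pair, Finset.card_pair h]

lemma mem_tileVerts {v p : GV} :
    v ∈ tileVerts p ↔ v = p ∨ v = p + (1,0) ∨ v = p + (0,1) ∨ v = p + (1,1) := by
  simp [tileVerts]

lemma SnakeGraph.pos_sum (G : SnakeGraph) : ∀ i, i < G.d →
    (G.pos i).1 + (G.pos i).2 = (G.pos 0).1 + (G.pos 0).2 + i := by
  intro i
  induction i with
  | zero => intro _; simp
  | succ n ih =>
    intro h
    have hn : n < G.d := by omega
    have := ih hn
    rcases G.step n h with h1 | h1 <;>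
      rw [h1] <;> simp [Prod.fst_add, Prod.snd_add] <;> omega

lemma SnakeGraph.mem_verts {G : SnakeGraph} {v : GV} :
    v ∈ G.verts ↔ ∃ i < G.d, v ∈ tileVerts (G.pos i) := by
  simp [SnakeGraph.verts]

lemma tileEdges_cases {e : GE} {p : GV} (h : e ∈ tileEdges p) :
    ∃ a b : GV, e = s(a,b) ∧ a ∈ tileVerts p ∧ b ∈ tileVerts p ∧ b.1 + b.2 = a.1 + a.2 + 1 := by
  simp only [tileEdges, Finset.mem_insert, Finset.mem_singleton] at h
  rcases h with rfl | rfl | rfl | rfl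
  · exact ⟨p, p + (1,0), rfl, by simp [mem_tileVerts], by simp [mem_tileVerts],
      by simp [Prod.fst_add, Prod.snd_add]; ring⟩
  · exact ⟨p + (0,1), p + (1,1), rfl, by simp [mem_tileVerts], by simp [mem_tileVerts],
      by simp [Prod.fst_add, Prod.snd_add]; ring⟩
  · exact ⟨p, p + (0,1), rfl, by simp [mem_tileVerts], by simp [mem_tileVerts],
      by simp [Prod.fst_add, Prod.snd_add]; ring⟩
  · exact ⟨p + (1,0), p + (1,1), rfl, by simp [mem_tileVerts], by simp [mem_tileVerts],
      by simp [Prod.fst_add, Prod.snd_add]; ring⟩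

lemma SnakeGraph.notMem_aux (G : SnakeGraph) {n : ℕ} (hn : n < G.d) {v : GV}
    (h2 : (G.pos n).1 + (G.pos n).2 + 2 ≤ v.1 + v.2 ∨
      (v.1 + v.2 = (G.pos n).1 + (G.pos n).2 + 1 ∧ (1 ≤ n → v ≠ G.pos (n-1) + (1,1)))) :
    v ∉ (Finset.range n).biUnion (fun i => tileVerts (G.pos i)) := by
  intro hv
  simp only [Finset.mem_biUnion, Finset.mem_range] at hv
  obtain ⟨j, hj, hjt⟩ := hv
  have hsj := G.pos_sum j (by omega)
  have hsn := G.pos_sum n hn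
  rcases mem_tileVerts.1 hjt with rfl | rfl | rfl | rfl
  · rcases h2 with h2 | ⟨h2, _⟩ <;> omega
  · rcases h2 with h2 | ⟨h2, _⟩ <;> simp [Prod.fst_add, Prod.snd_add] at h2 <;> omega
  · rcases h2 with h2 | ⟨h2, _⟩ <;> simp [Prod.fst_add, Prod.snd_add] at h2 <;> omega
  · rcases h2 with h2 | ⟨h2, h3⟩
    · simp [Prod.fst_add, Prod.snd_add] at h2; omega
    · simp only [Prod.fst_add, Prod.snd_add] at h2
      have hj' : j = n - 1 := by
        omega
      exact h3 (by omega) (by rw [hj'])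

lemma tileVerts_card (p : GV) : (tileVerts p).card = 4 := by
  rw [tileVerts]
  rw [Finset.card_insert_of_notMem (by simp [Prod.ext_iff]),
    Finset.card_insert_of_notMem (by simp [Prod.ext_iff]),
    Finset.card_insert_of_notMem (by simp [Prod.ext_iff]),
    Finset.card_singleton]

lemma SnakeGraph.verts_card (G : SnakeGraph) : G.verts.card = 2 * G.d + 2 := by
  suffices h : ∀ m, m + 1 ≤ G.d →
      ((Finset.range (m+1)).biUnion fun i => tileVerts (G.pos i)).card = 2*(m+1)+2 by
    have h1 := G.one_le
    have h2 := h (G.d - 1) (by omega)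
    have hd : G.d - 1 + 1 = G.d := by omega
    rw [hd] at h2
    rw [SnakeGraph.verts, h2]
  intro m
  induction m with
  | zero =>
    intro _
    have he : (Finset.range (0+1)).biUnion (fun i => tileVerts (G.pos i))
        = tileVerts (G.pos 0) := by simp
    rw [he, tileVerts_card]
  | succ n ih =>
    intro h
    have hUn := ih (by omega)
    rw [Finset.range_add_one, Finset.biUnion_insert]
    rw [← Finset.card_sdiff_add_card, hUn]
    set Un := (Finset.range (n+1)).biUnion fun i => tileVerts (G.pos i) with hUndef
    suffices hsd : (tileVerts (G.pos (n+1)) \ Un).card = 2 by omega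
    have hmemtile : ∀ v ∈ tileVerts (G.pos n), v ∈ Un := by
      intro v hv
      exact Finset.mem_biUnion.2 ⟨n, Finset.mem_range.2 (by omega), hv⟩
    rcases G.step n (by omega) with h1 | h1
    · -- north step
      have hin1 : G.pos (n+1) ∈ Un := hmemtile _ (by rw [h1]; simp [mem_tileVerts])
      have hin2 : G.pos (n+1) + (1,0) ∈ Un := by
        refine hmemtile _ ?_
        rw [h1, mem_tileVerts]
        right; right; right
        simp [Prod.ext_iff]
      have hout1 : G.pos (n+1) + (0,1) ∉ Un := by
        apply G.notMem_aux (by omega)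
        right
        constructor
        · simp only [Prod.fst_add, Prod.snd_add]; simp; omega
        · intro _ hv
          rw [h1] at hv
          simp [Prod.ext_iff] at hv
      have hout2 : G.pos (n+1) + (1,1) ∉ Un := by
        apply G.notMem_aux (by omega)
        left; simp only [Prod.fst_add, Prod.snd_add]; omega
      have heq : tileVerts (G.pos (n+1)) \ Un = {G.pos (n+1) + (0,1), G.pos (n+1) + (1,1)} := by
        ext v
        simp only [Finset.mem_sdiff, Finset.mem_insert, Finset.mem_singleton]
        constructor
        · rintro ⟨hv, hvn⟩
          rcases mem_tileVerts.1 hv with rfl | rfl | rfl | rfl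
          · exact absurd hin1 hvn
          · exact absurd hin2 hvn
          · exact Or.inl rfl
          · exact Or.inr rfl
        · rintro (rfl | rfl)
          · exact ⟨mem_tileVerts.2 (by tauto), hout1⟩
          · exact ⟨mem_tileVerts.2 (by tauto), hout2⟩
      rw [heq, Finset.card_insert_of_notMem (by simp [Prod.ext_iff]),
        Finset.card_singleton]
    · -- east step
      have hin1 : G.pos (n+1) ∈ Un := hmemtile _ (by rw [h1]; simp [mem_tileVerts])
      have hin2 : G.pos (n+1) + (0,1) ∈ Un := by
        refine hmemtile _ ?_
        rw [h1, mem_tileVerts]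
        right; right; right
        simp [Prod.ext_iff]
      have hout1 : G.pos (n+1) + (1,0) ∉ Un := by
        apply G.notMem_aux (by omega)
        right
        constructor
        · simp only [Prod.fst_add, Prod.snd_add]; simp; omega
        · intro _ hv
          rw [h1] at hv
          simp [Prod.ext_iff] at hv
      have hout2 : G.pos (n+1) + (1,1) ∉ Un := by
        apply G.notMem_aux (by omega)
        left; simp only [Prod.fst_add, Prod.snd_add]; omega
      have heq : tileVerts (G.pos (n+1)) \ Un = {G.pos (n+1) + (1,0), G.pos (n+1) + (1,1)} := by
        ext v
        simp only [Finset.mem_sdiff, Finset.mem_insert, Finset.mem_singleton]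
        constructor
        · rintro ⟨hv, hvn⟩
          rcases mem_tileVerts.1 hv with rfl | rfl | rfl | rfl
          · exact absurd hin1 hvn
          · exact Or.inl rfl
          · exact absurd hin2 hvn
          · exact Or.inr rfl
        · rintro (rfl | rfl)
          · exact ⟨mem_tileVerts.2 (by tauto), hout1⟩
          · exact ⟨mem_tileVerts.2 (by tauto), hout2⟩
      rw [heq, Finset.card_insert_of_notMem (by simp [Prod.ext_iff]),
        Finset.card_singleton]

lemma ne_of_sum_ne {a b : GV} (h : a.1 + a.2 ≠ b.1 + b.2) : a ≠ b :=
  fun he => h (by rw [he])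

namespace BandGraph
variable (B : BandGraph)

lemma sum_yy : B.yy.1 + B.yy.2 = B.xx.1 + B.xx.2 + 1 := by
  rw [BandGraph.yy, BandGraph.xx]
  split <;> simp only [Prod.fst_add, Prod.snd_add] <;> simp <;> omega

lemma sum_xx' : B.xx'.1 + B.xx'.2 = B.xx.1 + B.xx.2 + (B.G.d : ℤ) := by
  have h1 := B.G.one_le
  have h := B.G.pos_sum (B.G.d - 1) (by omega)
  rw [BandGraph.xx', BandGraph.xx]
  split <;> simp only [Prod.fst_add, Prod.snd_add] <;> simp <;> omega

lemma sum_yy' : B.yy'.1 + B.yy'.2 = B.xx.1 + B.xx.2 + (B.G.d : ℤ) + 1 := by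
  have h1 := B.G.one_le
  have h := B.G.pos_sum (B.G.d - 1) (by omega)
  rw [BandGraph.yy', BandGraph.xx]
  simp only [Prod.fst_add, Prod.snd_add]
  omega

lemma glueStep_xx' : B.glueStep B.xx' = B.xx := by
  rw [BandGraph.glueStep]; simp

lemma glueStep_yy' : B.glueStep B.yy' = B.yy := by
  have h1 := B.G.one_le
  have s2 := B.sum_xx'
  have s3 := B.sum_yy'
  rw [BandGraph.glueStep, if_neg (ne_of_sum_ne (by omega)), if_pos rfl]

lemma glueStep_fix {z : GV} (h1 : z ≠ B.xx') (h2 : z ≠ B.yy') : B.glueStep z = z := by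
  rw [BandGraph.glueStep, if_neg h1, if_neg h2]

lemma glueMap_xx' : B.glueMap B.xx' = B.xx := by
  have h1 := B.G.one_le
  have s2 := B.sum_xx'
  have s3 := B.sum_yy'
  rw [BandGraph.glueMap, B.glueStep_xx',
    B.glueStep_fix (ne_of_sum_ne (by omega)) (ne_of_sum_ne (by omega))]

lemma glueMap_yy' (h2 : 2 ≤ B.G.d) : B.glueMap B.yy' = B.yy := by
  have s1 := B.sum_yy
  have s2 := B.sum_xx'
  have s3 := B.sum_yy'
  rw [BandGraph.glueMap, B.glueStep_yy',
    B.glueStep_fix (ne_of_sum_ne (by omega)) (ne_of_sum_ne (by omega))]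

lemma glueMap_fix {z : GV} (h1 : z ≠ B.xx') (h2 : z ≠ B.yy') : B.glueMap z = z := by
  rw [BandGraph.glueMap, B.glueStep_fix h1 h2, B.glueStep_fix h1 h2]

lemma glueMap_sum (h2 : 2 ≤ B.G.d) (z : GV) :
    (B.glueMap z).1 + (B.glueMap z).2 = z.1 + z.2 ∨
    (z.1 + z.2 = B.xx.1 + B.xx.2 + (B.G.d : ℤ) ∧
      (B.glueMap z).1 + (B.glueMap z).2 = B.xx.1 + B.xx.2) ∨
    (z.1 + z.2 = B.xx.1 + B.xx.2 + (B.G.d : ℤ) + 1 ∧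
      (B.glueMap z).1 + (B.glueMap z).2 = B.xx.1 + B.xx.2 + 1) := by
  by_cases hx : z = B.xx'
  · subst hx
    exact Or.inr (Or.inl ⟨B.sum_xx', by rw [B.glueMap_xx']⟩)
  by_cases hy : z = B.yy'
  · subst hy
    exact Or.inr (Or.inr ⟨B.sum_yy', by rw [B.glueMap_yy' h2, B.sum_yy]⟩)
  · exact Or.inl (by rw [B.glueMap_fix hx hy])

lemma glueMap_collision (h2 : 2 ≤ B.G.d) {a b : GV}
    (hs : b.1 + b.2 = a.1 + a.2 + 1) (h : B.glueMap a = B.glueMap b) : False := by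
  have ha := B.glueMap_sum h2 a
  have hb := B.glueMap_sum h2 b
  rw [h] at ha
  rcases ha with ha | ⟨ha1, ha2⟩ | ⟨ha1, ha2⟩ <;>
    rcases hb with hb | ⟨hb1, hb2⟩ | ⟨hb1, hb2⟩ <;> omega

end BandGraph

namespace BandGraph
variable (B : BandGraph)

lemma xx_mem : B.xx ∈ B.G.verts :=
  SnakeGraph.mem_verts.2 ⟨0, B.G.one_le, mem_tileVerts.2 (Or.inl rfl)⟩

lemma yy_mem : B.yy ∈ B.G.verts := by
  refine SnakeGraph.mem_verts.2 ⟨0, B.G.one_le, mem_tileVerts.2 ?_⟩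
  rw [BandGraph.yy]
  split <;> tauto

lemma xx'_mem : B.xx' ∈ B.G.verts := by
  have h1 := B.G.one_le
  refine SnakeGraph.mem_verts.2 ⟨B.G.d - 1, by omega, mem_tileVerts.2 ?_⟩
  rw [BandGraph.xx']
  split <;> tauto

lemma yy'_mem : B.yy' ∈ B.G.verts := by
  have h1 := B.G.one_le
  exact SnakeGraph.mem_verts.2 ⟨B.G.d - 1, by omega, mem_tileVerts.2 (by rw [BandGraph.yy']; tauto)⟩

lemma bandVerts_eq (h2 : 2 ≤ B.G.d) : B.bandVerts = B.G.verts \ {B.xx', B.yy'} := by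
  have s1 := B.sum_yy
  have s2 := B.sum_xx'
  have s3 := B.sum_yy'
  ext v
  rw [BandGraph.bandVerts, Finset.mem_image]
  simp only [Finset.mem_sdiff, Finset.mem_insert, Finset.mem_singleton, not_or]
  constructor
  · rintro ⟨u, hu, rfl⟩
    by_cases hx : u = B.xx'
    · subst hx
      rw [B.glueMap_xx']
      exact ⟨B.xx_mem, ne_of_sum_ne (by omega), ne_of_sum_ne (by omega)⟩
    by_cases hy : u = B.yy'
    · subst hy
      rw [B.glueMap_yy' h2]
      exact ⟨B.yy_mem, ne_of_sum_ne (by omega), ne_of_sum_ne (by omega)⟩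
    · rw [B.glueMap_fix hx hy]
      exact ⟨hu, hx, hy⟩
  · rintro ⟨hv, hx, hy⟩
    exact ⟨v, hv, B.glueMap_fix hx hy⟩

lemma bandVerts_card (h2 : 2 ≤ B.G.d) : B.bandVerts.card = 2 * B.G.d := by
  have s2 := B.sum_xx'
  have s3 := B.sum_yy'
  have hsub : {B.xx', B.yy'} ⊆ B.G.verts := by
    intro v hv
    rcases Finset.mem_insert.1 hv with rfl | hv
    · exact B.xx'_mem
    · rw [Finset.mem_singleton] at hv; subst hv; exact B.yy'_mem
  rw [B.bandVerts_eq h2, Finset.card_sdiff_of_subset hsub, B.G.verts_card,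
    Finset.card_insert_of_notMem (by simp; exact ne_of_sum_ne (by omega)),
    Finset.card_singleton]
  have h1 := B.G.one_le
  omega

lemma mem_bandVerts_of_mem_bandEdges {e : GE} (he : e ∈ B.bandEdges) {v : GV} (hv : v ∈ e) :
    v ∈ B.bandVerts := by
  rw [BandGraph.bandEdges, Finset.mem_image] at he
  obtain ⟨e0, he0, rfl⟩ := he
  rw [Sym2.mem_map] at hv
  obtain ⟨w, hw, rfl⟩ := hv
  rw [SnakeGraph.edges, Finset.mem_biUnion] at he0
  obtain ⟨i, hi, hie⟩ := he0
  obtain ⟨a, b, rfl, ha, hb, _⟩ := tileEdges_cases hie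
  rw [Sym2.mem_iff] at hw
  have hwv : w ∈ B.G.verts :=
    SnakeGraph.mem_verts.2 ⟨i, Finset.mem_range.1 hi, by rcases hw with rfl | rfl <;> assumption⟩
  exact Finset.mem_image_of_mem _ hwv

lemma not_isDiag (h2 : 2 ≤ B.G.d) {e : GE} (he : e ∈ B.bandEdges) : ¬ e.IsDiag := by
  rw [BandGraph.bandEdges, Finset.mem_image] at he
  obtain ⟨e0, he0, rfl⟩ := he
  rw [SnakeGraph.edges, Finset.mem_biUnion] at he0
  obtain ⟨i, hi, hie⟩ := he0
  obtain ⟨a, b, rfl, _, _, hs⟩ := tileEdges_cases hie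
  rw [Sym2.map_pair_eq, Sym2.isDiag_iff_proj_eq]
  exact fun h => B.glueMap_collision h2 hs h

end BandGraph

lemma BandGraph.bandPM_card (B : BandGraph) (h2 : 2 ≤ B.G.d) {M : Finset GE}
    (hM : B.IsBandPM M) : M.card = B.G.d := by
  obtain ⟨hsub, huniq⟩ := hM
  have hbi : B.bandVerts = M.biUnion efin := by
    ext v
    rw [Finset.mem_biUnion]
    constructor
    · intro hv
      obtain ⟨e, ⟨heM, hve⟩, -⟩ := huniq v hv
      exact ⟨e, heM, mem_efin.2 hve⟩
    · rintro ⟨e, heM, hve⟩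
      exact B.mem_bandVerts_of_mem_bandEdges (hsub heM) (mem_efin.1 hve)
  have hdisj : ∀ e ∈ M, ∀ e' ∈ M, e ≠ e' → Disjoint (efin e) (efin e') := by
    intro e he e' he' hne
    rw [Finset.disjoint_left]
    intro v hv hv'
    have hvb := B.mem_bandVerts_of_mem_bandEdges (hsub he) (mem_efin.1 hv)
    obtain ⟨w, -, hwu⟩ := huniq v hvb
    exact hne ((hwu e ⟨he, mem_efin.1 hv⟩).trans (hwu e' ⟨he', mem_efin.1 hv'⟩).symm)
  have hcard : B.bandVerts.card = ∑ e ∈ M, (efin e).card := by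
    rw [hbi, Finset.card_biUnion hdisj]
  rw [B.bandVerts_card h2] at hcard
  have h22 : ∀ e ∈ M, (efin e).card = 2 :=
    fun e he => card_efin (B.not_isDiag h2 (hsub he))
  rw [Finset.sum_congr rfl h22, Finset.sum_const, smul_eq_mul] at hcard
  omega

lemma stdSign_pair (a b : GV) : stdSign s(a,b) =
    if a.2 = b.2 then decide ((min a.1 b.1 + a.2) % 2 = 0)
    else decide ((min a.1 b.1 + min a.2 b.2) % 2 = 1) := by
  rw [stdSign, Sym2.lift_mk]

lemma stdSign_horiz (a : GV) : stdSign s(a, a + (1,0)) = decide ((a.1 + a.2) % 2 = 0) := by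
  rw [stdSign_pair]
  split_ifs with h
  · simp only [Prod.fst_add, Prod.snd_add]
    rw [decide_eq_decide]
    omega
  · exfalso; apply h; simp

lemma stdSign_vert (a : GV) : stdSign s(a, a + (0,1)) = decide ((a.1 + a.2) % 2 = 1) := by
  rw [stdSign_pair]
  split_ifs with h
  · exfalso; simp [Prod.snd_add] at h
  · simp only [Prod.fst_add, Prod.snd_add]
    rw [decide_eq_decide]
    omega

lemma stdSign_south (p : GV) : stdSign (south p) = decide ((p.1 + p.2) % 2 = 0) :=
  stdSign_horiz p

lemma stdSign_west (p : GV) : stdSign (west p) = decide ((p.1 + p.2) % 2 = 1) :=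
  stdSign_vert p

lemma stdSign_north (p : GV) : stdSign (north p) = decide ((p.1 + p.2) % 2 = 1) := by
  have he : north p = s(p + (0,1), (p + (0,1)) + (1,0)) := by
    rw [north, add_assoc]
    norm_num
  rw [he, stdSign_horiz]
  simp only [Prod.fst_add, Prod.snd_add]
  rw [decide_eq_decide]
  omega

lemma stdSign_east (p : GV) : stdSign (east p) = decide ((p.1 + p.2) % 2 = 0) := by
  have he : east p = s(p + (1,0), (p + (1,0)) + (0,1)) := by
    rw [east, add_assoc]
    norm_num
  rw [he, stdSign_vert]
  simp only [Prod.fst_add, Prod.snd_add]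
  rw [decide_eq_decide]
  omega

lemma self_ne_add (p : GV) {c : GV} (h : c ≠ 0) : p ≠ p + c := by
  intro he
  apply h
  have h2 : p + 0 = p + c := by rw [add_zero]; exact he
  exact (add_left_cancel h2).symm

lemma add_ne_add' (p : GV) {c c' : GV} (h : c ≠ c') : p + c ≠ p + c' := by
  intro he
  exact h (add_left_cancel he)

lemma BandGraph.not_goodPM_of_d_one (B : BandGraph) (hd : B.G.d = 1) (M : Finset GE) :
    ¬ B.IsGoodPM M := by
  rintro ⟨⟨hsub, huniq⟩, e, heI, heM⟩
  have hp0 : B.G.d - 1 = 0 := by omega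
  have hcompat := B.compat
  rw [hp0] at hcompat
  -- interior edges of the snake graph are empty
  have hint : B.G.interiorEdges = ∅ := by
    rw [Finset.eq_empty_iff_forall_notMem]
    intro x hx
    rw [SnakeGraph.interiorEdges, Finset.mem_filter] at hx
    obtain ⟨-, i, hi, j, hj, hij, -⟩ := hx
    omega
  have he' : e = B.glueEdge := by
    rw [BandGraph.bandInteriorEdges, hint] at heI
    simpa using heI
  -- there are only two possible sign-compatible cases
  cases hBS : B.bSouth <;> cases hBN : B.bNorth <;> rw [hBS, hBN] at hcompat <;>
    simp only [if_true, if_false, Bool.false_eq_true, ite_true, ite_false] at hcompat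
  -- case bSouth = false, bNorth = false : impossible
  case false.false =>
    rw [stdSign_west, stdSign_east, decide_eq_decide] at hcompat
    omega
  -- case bSouth = false, bNorth = true : main argument (v₀ = p + (1,0))
  case false.true =>
    have hxx : B.xx = B.G.pos 0 := rfl
    have hyy : B.yy = B.G.pos 0 + (0,1) := by
      simp only [BandGraph.yy, hBS, Bool.false_eq_true, ite_false]
    have hxx' : B.xx' = B.G.pos 0 + (0,1) := by
      simp only [BandGraph.xx', hBN, hp0, ite_true]
    have hyy' : B.yy' = B.G.pos 0 + (1,1) := by
      simp only [BandGraph.yy', hp0]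
    have g1 : B.glueMap (B.G.pos 0) = B.G.pos 0 :=
      B.glueMap_fix (by rw [hxx']; exact self_ne_add _ (by decide))
        (by rw [hyy']; exact self_ne_add _ (by decide))
    have g2 : B.glueMap (B.G.pos 0 + (0,1)) = B.G.pos 0 := by
      rw [← hxx', B.glueMap_xx', hxx]
    have g3 : B.glueMap (B.G.pos 0 + (1,0)) = B.G.pos 0 + (1,0) :=
      B.glueMap_fix (by rw [hxx']; exact add_ne_add' _ (by decide))
        (by rw [hyy']; exact add_ne_add' _ (by decide))
    have g4 : B.glueMap (B.G.pos 0 + (1,1)) = B.G.pos 0 := by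
      rw [← hyy']
      show B.glueStep (B.glueStep B.yy') = B.G.pos 0
      rw [B.glueStep_yy', hyy, ← hxx', B.glueStep_xx', hxx]
    have hge : B.glueEdge = s(B.G.pos 0, B.G.pos 0) := by
      rw [BandGraph.glueEdge, BandGraph.bEdge']
      simp only [hBN, hp0, ite_true]
      rw [north, Sym2.map_pair_eq, g2, g4]
    have hv0 : B.G.pos 0 + (1,0) ∈ B.bandVerts :=
      Finset.mem_image.2 ⟨B.G.pos 0 + (1,0),
        SnakeGraph.mem_verts.2 ⟨0, B.G.one_le, mem_tileVerts.2 (by tauto)⟩, g3⟩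
    have hpv : B.G.pos 0 ∈ B.bandVerts :=
      Finset.mem_image.2 ⟨B.G.pos 0,
        SnakeGraph.mem_verts.2 ⟨0, B.G.one_le, mem_tileVerts.2 (by tauto)⟩, g1⟩
    obtain ⟨e', ⟨he'M, hv0e'⟩, -⟩ := huniq _ hv0
    have he'b := hsub he'M
    rw [BandGraph.bandEdges, Finset.mem_image] at he'b
    obtain ⟨e0, he0, he0e⟩ := he'b
    rw [SnakeGraph.edges, Finset.mem_biUnion] at he0
    obtain ⟨i, hi, hie⟩ := he0
    rw [Finset.mem_range] at hi
    have hi0 : i = 0 := by omega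
    subst hi0
    simp only [tileEdges, Finset.mem_insert, Finset.mem_singleton] at hie
    have hpe' : B.G.pos 0 ∈ e' := by
      rcases hie with rfl | rfl | rfl | rfl <;> rw [← he0e]
      · rw [south, Sym2.map_pair_eq, g1, g3]
        exact Sym2.mem_iff.2 (Or.inl rfl)
      · rw [north, Sym2.map_pair_eq, g2, g4]
        exact Sym2.mem_iff.2 (Or.inl rfl)
      · rw [west, Sym2.map_pair_eq, g1, g2]
        exact Sym2.mem_iff.2 (Or.inl rfl)
      · rw [east, Sym2.map_pair_eq, g3, g4]
        exact Sym2.mem_iff.2 (Or.inr rfl)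
    obtain ⟨f, -, hfu⟩ := huniq _ hpv
    have h1 : e' = f := hfu e' ⟨he'M, hpe'⟩
    have h2 : e = f := hfu e ⟨heM, by rw [he', hge]; exact Sym2.mem_iff.2 (Or.inl rfl)⟩
    rw [h1, ← h2, he', hge] at hv0e'
    rcases Sym2.mem_iff.1 hv0e' with h | h <;>
      exact self_ne_add (B.G.pos 0) (c := (1,0)) (by decide) h.symm
  -- case bSouth = true, bNorth = false : main argument (v₀ = p + (0,1))
  case true.false =>
    have hxx : B.xx = B.G.pos 0 := rfl
    have hyy : B.yy = B.G.pos 0 + (1,0) := by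
      simp only [BandGraph.yy, hBS, ite_true]
    have hxx' : B.xx' = B.G.pos 0 + (1,0) := by
      simp only [BandGraph.xx', hBN, hp0, Bool.false_eq_true, ite_false]
    have hyy' : B.yy' = B.G.pos 0 + (1,1) := by
      simp only [BandGraph.yy', hp0]
    have g1 : B.glueMap (B.G.pos 0) = B.G.pos 0 :=
      B.glueMap_fix (by rw [hxx']; exact self_ne_add _ (by decide))
        (by rw [hyy']; exact self_ne_add _ (by decide))
    have g2 : B.glueMap (B.G.pos 0 + (1,0)) = B.G.pos 0 := by
      rw [← hxx', B.glueMap_xx', hxx]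
    have g3 : B.glueMap (B.G.pos 0 + (0,1)) = B.G.pos 0 + (0,1) :=
      B.glueMap_fix (by rw [hxx']; exact add_ne_add' _ (by decide))
        (by rw [hyy']; exact add_ne_add' _ (by decide))
    have g4 : B.glueMap (B.G.pos 0 + (1,1)) = B.G.pos 0 := by
      rw [← hyy']
      show B.glueStep (B.glueStep B.yy') = B.G.pos 0
      rw [B.glueStep_yy', hyy, ← hxx', B.glueStep_xx', hxx]
    have hge : B.glueEdge = s(B.G.pos 0, B.G.pos 0) := by
      rw [BandGraph.glueEdge, BandGraph.bEdge']
      simp only [hBN, hp0, Bool.false_eq_true, ite_false]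
      rw [east, Sym2.map_pair_eq, g2, g4]
    have hv0 : B.G.pos 0 + (0,1) ∈ B.bandVerts :=
      Finset.mem_image.2 ⟨B.G.pos 0 + (0,1),
        SnakeGraph.mem_verts.2 ⟨0, B.G.one_le, mem_tileVerts.2 (by tauto)⟩, g3⟩
    have hpv : B.G.pos 0 ∈ B.bandVerts :=
      Finset.mem_image.2 ⟨B.G.pos 0,
        SnakeGraph.mem_verts.2 ⟨0, B.G.one_le, mem_tileVerts.2 (by tauto)⟩, g1⟩
    obtain ⟨e', ⟨he'M, hv0e'⟩, -⟩ := huniq _ hv0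
    have he'b := hsub he'M
    rw [BandGraph.bandEdges, Finset.mem_image] at he'b
    obtain ⟨e0, he0, he0e⟩ := he'b
    rw [SnakeGraph.edges, Finset.mem_biUnion] at he0
    obtain ⟨i, hi, hie⟩ := he0
    rw [Finset.mem_range] at hi
    have hi0 : i = 0 := by omega
    subst hi0
    simp only [tileEdges, Finset.mem_insert, Finset.mem_singleton] at hie
    have hpe' : B.G.pos 0 ∈ e' := by
      rcases hie with rfl | rfl | rfl | rfl <;> rw [← he0e]
      · rw [south, Sym2.map_pair_eq, g1, g2]
        exact Sym2.mem_iff.2 (Or.inl rfl)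
      · rw [north, Sym2.map_pair_eq, g3, g4]
        exact Sym2.mem_iff.2 (Or.inr rfl)
      · rw [west, Sym2.map_pair_eq, g1, g3]
        exact Sym2.mem_iff.2 (Or.inl rfl)
      · rw [east, Sym2.map_pair_eq, g2, g4]
        exact Sym2.mem_iff.2 (Or.inl rfl)
    obtain ⟨f, -, hfu⟩ := huniq _ hpv
    have h1 : e' = f := hfu e' ⟨he'M, hpe'⟩
    have h2 : e = f := hfu e ⟨heM, by rw [he', hge]; exact Sym2.mem_iff.2 (Or.inl rfl)⟩
    rw [h1, ← h2, he', hge] at hv0e'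
    rcases Sym2.mem_iff.1 hv0e' with h | h <;>
      exact self_ne_add (B.G.pos 0) (c := (0,1)) (by decide) h.symm
  -- case bSouth = true, bNorth = true : impossible
  case true.true =>
    rw [stdSign_south, stdSign_north, decide_eq_decide] at hcompat
    omega

/-- every good perfect matching of a band graph with `d` tiles
has exactly `d` edges. -/
theorem good_matching_card (B : BandGraph) (M : Finset GE)
    (hM : B.IsGoodPM M) : M.card = B.G.d := by
  rcases Nat.lt_or_ge B.G.d 2 with h | h
  · have h1 := B.G.one_le
    have hd : B.G.d = 1 := by omega
    exact absurd hM (B.not_goodPM_of_d_one hd M)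
  · exact B.bandPM_card h hM.1
end
end

section
/- Every unlabeled snake graph is geometric and unpunctured: for every snake graph G there exists a triangulated polygon (disk with marked points on the boundary) and an arc γ in it whose associated snake graph equals G. Specifically, a snake graph with d tiles can be realised by an arc in a polygon with d + 3 vertices. -/
/- Combinatorial model of abstract snake graphs and band graphs
   (Canakci–Schiffler, "Snake graph calculus III").
   Tiles are unit squares in the integer grid; a snake graph is a finite
   sequence of tiles, consecutive tiles glued north/south or east/west. -/

open scoped Classical
open Finset

noncomputable section

/- Combinatorial model of a triangulated convex polygon with vertex set
`Fin n` in counterclockwise cyclic order, and of an arc between two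
boundary vertices together with its sequence of crossings. -/

/-- cyclic distance from `a` to `x` going counterclockwise -/
def cdist (n : ℕ) (a x : Fin n) : ℕ := (x.val + n - a.val) % n

/-- `x` lies strictly between `a` and `b` counterclockwise -/
def CycBtw (n : ℕ) (a x b : Fin n) : Prop := 0 < cdist n a x ∧ cdist n a x < cdist n a b

/-- the chord from `a` to `b` crosses the chord `e` -/
def ChordCrosses (n : ℕ) (a b : Fin n) (e : Fin n × Fin n) : Prop :=
  (CycBtw n a e.1 b ∧ CycBtw n b e.2 a) ∨ (CycBtw n a e.2 b ∧ CycBtw n b e.1 a)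

/-- `e` is a diagonal: its endpoints are distinct and non-adjacent -/
def IsDiagonal (n : ℕ) (e : Fin n × Fin n) : Prop :=
  cdist n e.1 e.2 ≠ 0 ∧ cdist n e.1 e.2 ≠ 1 ∧ cdist n e.2 e.1 ≠ 1

/-- `e` and `f` are the same chord (as unordered pairs) -/
def SameChord (n : ℕ) (e f : Fin n × Fin n) : Prop :=
  (e.1 = f.1 ∧ e.2 = f.2) ∨ (e.1 = f.2 ∧ e.2 = f.1)

/-- a triangulation of the convex `n`-gon: `n - 3` pairwise noncrossing,
pairwise distinct diagonals (a maximal such collection) -/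
def IsTriangulation (n : ℕ) (T : Finset (Fin n × Fin n)) : Prop :=
  T.card = n - 3 ∧ (∀ e ∈ T, IsDiagonal n e) ∧
    (∀ e ∈ T, ∀ f ∈ T, ¬ ChordCrosses n e.1 e.2 f) ∧
    (∀ e ∈ T, ∀ f ∈ T, SameChord n e f → e = f)

/-- the tiles `j, j+1, j+2` of a snake graph form a straight piece -/
def StraightAt (G : SnakeGraph) (j : ℕ) : Prop :=
  G.pos (j + 1) - G.pos j = G.pos (j + 2) - G.pos (j + 1)

/-- `PolygonRealises n T a b seq G` : in the triangulated `n`-gon `(Fin n, T)`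
the arc from `a` to `b` crosses exactly the diagonals `seq 0, …, seq (d-1)`,
in this order (each recorded with its first endpoint on the left of the arc),
and the zigzag/straight pattern of the crossing sequence matches the snake
graph `G`; i.e. the snake graph associated to the arc `(a, b)` is `G`
(up to the reflection symmetry of snake graphs). -/
def PolygonRealises (n : ℕ) (T : Finset (Fin n × Fin n)) (a b : Fin n)
    (seq : ℕ → Fin n × Fin n) (G : SnakeGraph) : Prop :=
  IsTriangulation n T ∧ a ≠ b ∧
  -- the seq j are distinct diagonals of T crossed by the arc,
  -- the first endpoint on the left side, the second on the right side
  (∀ j < G.d, seq j ∈ T ∧ CycBtw n a (seq j).1 b ∧ CycBtw n b (seq j).2 a) ∧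
  (∀ j < G.d, ∀ k < G.d, j ≠ k → ¬ SameChord n (seq j) (seq k)) ∧
  -- every diagonal of T crossed by the arc occurs in the sequence
  (∀ e ∈ T, ChordCrosses n a b e → ∃ j < G.d, SameChord n (seq j) e) ∧
  -- the diagonals are listed in the order in which the arc crosses them:
  -- no endpoint of the next diagonal is strictly inside the region cut off
  -- by the previous one on the side of `a`
  (∀ j, j + 1 < G.d →
    (¬ CycBtw n (seq j).2 (seq (j + 1)).1 (seq j).1 ∨ (seq (j + 1)).1 = (seq j).1) ∧
    (¬ CycBtw n (seq j).2 (seq (j + 1)).2 (seq j).1 ∨ (seq (j + 1)).2 = (seq j).2)) ∧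
  -- consecutive crossed diagonals share a vertex (the pivot)
  (∀ j, j + 1 < G.d → ∃ w : Fin n,
    (w = (seq j).1 ∨ w = (seq j).2) ∧ (w = (seq (j + 1)).1 ∨ w = (seq (j + 1)).2)) ∧
  -- shape condition: three consecutive tiles of `G` are straight exactly when
  -- the two consecutive pivots lie on opposite sides of the arc
  (∀ j, j + 2 < G.d → ∀ w w' : Fin n,
    ((w = (seq j).1 ∨ w = (seq j).2) ∧ (w = (seq (j + 1)).1 ∨ w = (seq (j + 1)).2)) →
    ((w' = (seq (j + 1)).1 ∨ w' = (seq (j + 1)).2) ∧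
      (w' = (seq (j + 2)).1 ∨ w' = (seq (j + 2)).2)) →
    (StraightAt G j ↔ ¬ (CycBtw n a w b ↔ CycBtw n a w' b)))

namespace SnakeReal

/-- direction of the step from tile `j` to tile `j+1` (`true` = north) -/
def dir (G : SnakeGraph) (j : ℕ) : Bool := decide (G.pos (j+1) = G.pos j + (0,1))

/-- side of the `j`-th pivot (`true` = left of the arc) -/
def sd (G : SnakeGraph) : ℕ → Bool
  | 0 => true
  | j+1 => if dir G j = dir G (j+1) then !(sd G j) else sd G j

/-- left endpoint of the `j`-th crossed diagonal -/
def lf (G : SnakeGraph) : ℕ → ℕ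
  | 0 => 1
  | j+1 => if sd G j then lf G j else lf G j + 1

/-- right endpoint of the `j`-th crossed diagonal -/
def rf (G : SnakeGraph) : ℕ → ℕ
  | 0 => G.d + 2
  | j+1 => if sd G j then rf G j - 1 else rf G j

lemma lf_mono (G : SnakeGraph) : Monotone (lf G) :=
  monotone_nat_of_le_succ fun j => by simp only [lf]; split <;> omega

lemma rf_anti (G : SnakeGraph) : Antitone (rf G) :=
  antitone_nat_of_succ_le fun j => by simp only [rf]; split <;> omega

lemma lf_pos (G : SnakeGraph) (j : ℕ) : 1 ≤ lf G j := lf_mono G (Nat.zero_le j)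

lemma lf_le (G : SnakeGraph) : ∀ j, lf G j ≤ j + 1 := by
  intro j
  induction j with
  | zero => simp [lf]
  | succ j ih => simp only [lf]; split <;> omega

lemma rf_le (G : SnakeGraph) (j : ℕ) : rf G j ≤ G.d + 2 := by
  have h := rf_anti G (Nat.zero_le j)
  simpa [rf] using h

lemma lin (G : SnakeGraph) : ∀ j, j ≤ G.d → rf G j + j = lf G j + G.d + 1 := by
  intro j
  induction j with
  | zero => intro _; simp [lf, rf]; omega
  | succ j ih =>
    intro h
    have h1 := ih (by omega)
    have h2 := lf_pos G j
    simp only [lf, rf]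
    split <;> omega

/-- all basic bounds in one package -/
lemma bnd (G : SnakeGraph) (j : ℕ) (hj : j + 1 ≤ G.d) :
    1 ≤ lf G j ∧ lf G j ≤ lf G (G.d - 1) ∧ lf G (G.d - 1) + 2 ≤ rf G j ∧
    rf G j ≤ G.d + 2 ∧ rf G j + j = lf G j + G.d + 1 ∧
    rf G (G.d - 1) = lf G (G.d - 1) + 2 ∧ lf G (G.d - 1) ≤ G.d := by
  have hd := G.one_le
  have h1 := lf_mono G (show j ≤ G.d - 1 by omega)
  have h2 := rf_anti G (show j ≤ G.d - 1 by omega)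
  have h3 := lin G j (by omega)
  have h4 := lin G (G.d - 1) (by omega)
  have h5 := lf_pos G j
  have h6 := lf_pos G (G.d - 1)
  have h7 := rf_le G (G.d - 1)
  have h8 := rf_le G j
  refine ⟨h5, h1, ?_, h8, h3, ?_, ?_⟩ <;> omega

def aV (G : SnakeGraph) : Fin (G.d + 3) := ⟨0, by omega⟩

def bV (G : SnakeGraph) : Fin (G.d + 3) :=
  ⟨lf G (G.d - 1) + 1, by have := lf_le G (G.d - 1); have := G.one_le; omega⟩

def seqF (G : SnakeGraph) (j : ℕ) : Fin (G.d + 3) × Fin (G.d + 3) :=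
  (⟨lf G (min j (G.d - 1)), by
      have := lf_le G (min j (G.d - 1)); have := G.one_le
      have := Nat.min_le_right j (G.d - 1); omega⟩,
   ⟨rf G (min j (G.d - 1)), by have := rf_le G (min j (G.d - 1)); omega⟩)

lemma seqF_fst (G : SnakeGraph) {j : ℕ} (hj : j < G.d) :
    ((seqF G j).1 : ℕ) = lf G j := by
  have h : min j (G.d - 1) = j := by have := G.one_le; omega
  simp [seqF, h]

lemma seqF_snd (G : SnakeGraph) {j : ℕ} (hj : j < G.d) :
    ((seqF G j).2 : ℕ) = rf G j := by
  have h : min j (G.d - 1) = j := by have := G.one_le; omega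
  simp [seqF, h]

lemma cdist_eq {n : ℕ} (a x : Fin n) :
    cdist n a x = if a.val ≤ x.val then x.val - a.val else x.val + n - a.val := by
  have hx := x.isLt; have ha := a.isLt
  unfold cdist
  split
  · rw [show x.val + n - a.val = (x.val - a.val) + n by omega, Nat.add_mod_right,
      Nat.mod_eq_of_lt (by omega)]
  · exact Nat.mod_eq_of_lt (by omega)

lemma cycBtw_iff {n : ℕ} (a x b : Fin n) :
    CycBtw n a x b ↔
      (0 < (if a.val ≤ x.val then x.val - a.val else x.val + n - a.val) ∧
        (if a.val ≤ x.val then x.val - a.val else x.val + n - a.val) <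
        (if a.val ≤ b.val then b.val - a.val else b.val + n - a.val)) := by
  unfold CycBtw; rw [cdist_eq, cdist_eq]

lemma straight_iff (G : SnakeGraph) (j : ℕ) (h : j + 2 < G.d) :
    StraightAt G j ↔ (dir G j = dir G (j+1)) := by
  rcases G.step j (by omega) with h1 | h1 <;> rcases G.step (j+1) (by omega) with h2 | h2 <;>
    simp [StraightAt, dir, h1, h2, Prod.ext_iff]

lemma sd_succ (G : SnakeGraph) (j : ℕ) :
    sd G (j+1) = if dir G j = dir G (j+1) then !(sd G j) else sd G j := rfl

lemma cyc_w (G : SnakeGraph) (j : ℕ) (hj : j + 1 < G.d) (w : Fin (G.d + 3))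
    (hw : (w = (seqF G j).1 ∨ w = (seqF G j).2) ∧
          (w = (seqF G (j+1)).1 ∨ w = (seqF G (j+1)).2)) :
    (CycBtw (G.d + 3) (aV G) w (bV G) ↔ sd G j = true) := by
  obtain ⟨B1, B2, B3, B4, B5, B6, B7⟩ := bnd G j (by omega)
  obtain ⟨C1, C2, C3, C4, C5, _, _⟩ := bnd G (j+1) hj
  obtain ⟨hwa, hwb⟩ := hw
  have hwa' : (w : ℕ) = lf G j ∨ (w : ℕ) = rf G j := by
    rcases hwa with h | h
    · exact Or.inl (by rw [h, seqF_fst G (by omega)])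
    · exact Or.inr (by rw [h, seqF_snd G (by omega)])
  have hwb' : (w : ℕ) = lf G (j+1) ∨ (w : ℕ) = rf G (j+1) := by
    rcases hwb with h | h
    · exact Or.inl (by rw [h, seqF_fst G hj])
    · exact Or.inr (by rw [h, seqF_snd G hj])
  have ha : (aV G).val = 0 := rfl
  have hb : (bV G).val = lf G (G.d - 1) + 1 := rfl
  rw [cycBtw_iff, ha, hb]
  cases hsd : sd G j
  · have hl : lf G (j+1) = lf G j + 1 := by simp [lf, hsd]
    have hr : rf G (j+1) = rf G j := by simp [rf, hsd]
    have hw2 : (w : ℕ) = rf G j := by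
      rcases hwa' with h | h <;> rcases hwb' with h' | h' <;> omega
    simp only [Bool.false_eq_true, iff_false, not_and, not_lt]
    split_ifs <;> omega
  · have hl : lf G (j+1) = lf G j := by simp [lf, hsd]
    have hr : rf G (j+1) = rf G j - 1 := by simp [rf, hsd]
    have hw2 : (w : ℕ) = lf G j := by
      rcases hwa' with h | h <;> rcases hwb' with h' | h' <;> omega
    simp only [iff_true]
    split_ifs <;> omega

end SnakeReal

open SnakeReal

/-- every unlabeled snake graph is geometric and unpunctured:
a snake graph with `d` tiles is the snake graph of an arc in a triangulated
polygon with `d + 3` vertices. -/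
theorem snake_realizable_in_polygon (G : SnakeGraph) :
    ∃ (T : Finset (Fin (G.d + 3) × Fin (G.d + 3))) (a b : Fin (G.d + 3))
      (seq : ℕ → Fin (G.d + 3) × Fin (G.d + 3)),
      PolygonRealises (G.d + 3) T a b seq G := by
  have hd := G.one_le
  refine ⟨(Finset.range G.d).image (seqF G), aV G, bV G, seqF G,
    ⟨?_, ?_, ?_, ?_⟩, ?_, ?_, ?_, ?_, ?_, ?_, ?_⟩
  · -- card
    have hinj : Set.InjOn (seqF G) (Finset.range G.d) := by
      intro j hj k hk h
      simp only [Finset.coe_range, Set.mem_Iio] at hj hk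
      have h1 : lf G j = lf G k := by
        have h' : ((seqF G j).1 : ℕ) = ((seqF G k).1 : ℕ) := by rw [h]
        rwa [seqF_fst G hj, seqF_fst G hk] at h'
      have l1 := lin G j (by omega)
      have l2 := lin G k (by omega)
      have h2 : rf G j = rf G k := by
        have h' : ((seqF G j).2 : ℕ) = ((seqF G k).2 : ℕ) := by rw [h]
        rwa [seqF_snd G hj, seqF_snd G hk] at h'
      omega
    rw [Finset.card_image_of_injOn hinj, Finset.card_range]
    omega
  · -- diagonals
    intro e he
    obtain ⟨j, hj, rfl⟩ := Finset.mem_image.mp he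
    have hj' : j < G.d := Finset.mem_range.mp hj
    obtain ⟨B1, B2, B3, B4, B5, B6, B7⟩ := bnd G j hj'
    refine ⟨?_, ?_, ?_⟩ <;>
      rw [cdist_eq] <;> rw [seqF_fst G hj', seqF_snd G hj'] <;> split_ifs <;> omega
  · -- noncrossing
    intro e he f hf
    obtain ⟨j, hj, rfl⟩ := Finset.mem_image.mp he
    obtain ⟨k, hk, rfl⟩ := Finset.mem_image.mp hf
    have hj' : j < G.d := Finset.mem_range.mp hj
    have hk' : k < G.d := Finset.mem_range.mp hk
    obtain ⟨B1, B2, B3, B4, B5, B6, B7⟩ := bnd G j hj'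
    obtain ⟨C1, C2, C3, C4, C5, _, _⟩ := bnd G k hk'
    rcases le_total j k with hjk | hjk
    · have m1 := lf_mono G hjk
      have m2 := rf_anti G hjk
      simp only [ChordCrosses, cycBtw_iff, seqF_fst G hj', seqF_snd G hj',
        seqF_fst G hk', seqF_snd G hk', not_or, not_and, not_lt]
      constructor <;> intro h <;> split_ifs at h ⊢ <;> omega
    · have m1 := lf_mono G hjk
      have m2 := rf_anti G hjk
      simp only [ChordCrosses, cycBtw_iff, seqF_fst G hj', seqF_snd G hj',
        seqF_fst G hk', seqF_snd G hk', not_or, not_and, not_lt]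
      constructor <;> intro h <;> split_ifs at h ⊢ <;> omega
  · -- same chord implies equal
    intro e he f hf hsc
    obtain ⟨j, hj, rfl⟩ := Finset.mem_image.mp he
    obtain ⟨k, hk, rfl⟩ := Finset.mem_image.mp hf
    have hj' : j < G.d := Finset.mem_range.mp hj
    have hk' : k < G.d := Finset.mem_range.mp hk
    obtain ⟨B1, B2, B3, _, _, _, _⟩ := bnd G j hj'
    obtain ⟨C1, C2, C3, _, _, _, _⟩ := bnd G k hk'
    rcases hsc with ⟨h1, h2⟩ | ⟨h1, h2⟩
    · exact Prod.ext h1 h2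
    · exfalso
      have := congrArg Fin.val h1
      rw [seqF_fst G hj', seqF_snd G hk'] at this
      omega
  · -- a ≠ b
    intro h
    have := congrArg Fin.val h
    simp only [aV, bV] at this
    omega
  · -- crossing data
    intro j hj
    obtain ⟨B1, B2, B3, B4, B5, B6, B7⟩ := bnd G j hj
    refine ⟨Finset.mem_image_of_mem _ (Finset.mem_range.mpr hj), ?_, ?_⟩ <;>
      rw [cycBtw_iff] <;>
      simp only [seqF_fst G hj, seqF_snd G hj,
        show (aV G).val = 0 from rfl, show (bV G).val = lf G (G.d-1)+1 from rfl] <;>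
      split_ifs <;> omega
  · -- distinctness
    intro j hj k hk hne hsc
    have l1 := lin G j (by omega)
    have l2 := lin G k (by omega)
    obtain ⟨B1, B2, B3, _, _, _, _⟩ := bnd G j hj
    obtain ⟨C1, C2, C3, _, _, _, _⟩ := bnd G k hk
    rcases hsc with ⟨h1, h2⟩ | ⟨h1, h2⟩
    · have e1 := congrArg Fin.val h1
      have e2 := congrArg Fin.val h2
      rw [seqF_fst G hj, seqF_fst G hk] at e1
      rw [seqF_snd G hj, seqF_snd G hk] at e2
      omega
    · have e1 := congrArg Fin.val h1
      rw [seqF_fst G hj, seqF_snd G hk] at e1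
      omega
  · -- completeness
    intro e he _
    obtain ⟨j, hj, rfl⟩ := Finset.mem_image.mp he
    exact ⟨j, Finset.mem_range.mp hj, Or.inl ⟨rfl, rfl⟩⟩
  · -- ordering
    intro j hj
    obtain ⟨B1, B2, B3, B4, B5, B6, B7⟩ := bnd G j (by omega)
    obtain ⟨C1, C2, C3, C4, C5, _, _⟩ := bnd G (j+1) hj
    constructor
    · cases hsd : sd G j
      · refine Or.inl ?_
        rw [cycBtw_iff]
        have hl : lf G (j+1) = lf G j + 1 := by simp [lf, hsd]
        simp only [seqF_fst G (show j < G.d by omega), seqF_snd G (show j < G.d by omega),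
          seqF_fst G hj]
        split_ifs <;> omega
      · refine Or.inr (Fin.val_injective ?_)
        rw [seqF_fst G hj, seqF_fst G (show j < G.d by omega)]
        simp [lf, hsd]
    · cases hsd : sd G j
      · refine Or.inr (Fin.val_injective ?_)
        rw [seqF_snd G hj, seqF_snd G (show j < G.d by omega)]
        simp [rf, hsd]
      · refine Or.inl ?_
        rw [cycBtw_iff]
        have hr : rf G (j+1) = rf G j - 1 := by simp [rf, hsd]
        simp only [seqF_fst G (show j < G.d by omega), seqF_snd G (show j < G.d by omega),
          seqF_snd G hj]
        split_ifs <;> omega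
  · -- pivots
    intro j hj
    cases hsd : sd G j
    · refine ⟨(seqF G j).2, Or.inr rfl, Or.inr (Fin.val_injective ?_)⟩
      rw [seqF_snd G (show j < G.d by omega), seqF_snd G hj]
      simp [rf, hsd]
    · refine ⟨(seqF G j).1, Or.inl rfl, Or.inl (Fin.val_injective ?_)⟩
      rw [seqF_fst G (show j < G.d by omega), seqF_fst G hj]
      simp [lf, hsd]
  · -- shape
    intro j hj w w' hw hw'
    rw [straight_iff G j hj, cyc_w G j (by omega) w hw, cyc_w G (j+1) (by omega) w' hw']
    by_cases h : dir G j = dir G (j+1) <;> cases hs : sd G j <;>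
      simp [h, hs, sd_succ G j]
end
end

section
/- Let f_d ∈ ℤ[y] be defined by f_0 = 1, f_1 = y + 1, and f_d = y·f_{d-1} + f_{d-2} if d is even, f_d = f_{d-1} + y²·f_{d-2} if d is odd. Then f_d is the rank generating function of the lattice of perfect matchings of the straight snake graph with d tiles (whose first interior edge has sign +); in particular, f_d evaluated at y = 1 equals the (d+2)-nd Fibonacci number. -/
/- Combinatorial model of abstract snake graphs and band graphs
   (Canakci–Schiffler, "Snake graph calculus III").
   Tiles are unit squares in the integer grid; a snake graph is a finite
   sequence of tiles, consecutive tiles glued north/south or east/west. -/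

open scoped Classical
open Finset

noncomputable section

/-- the straight snake graph with `d` tiles, all in one row -/
def straightSnake (d : ℕ) (hd : 1 ≤ d) : SnakeGraph where
  d := d
  pos := fun i => ((i : ℤ), 0)
  one_le := hd
  step := fun i _ => Or.inr (by simp [Prod.ext_iff])

/-- the polynomials `f_d`: `f_0 = 1`, `f_1 = y + 1`,
`f_d = y f_{d-1} + f_{d-2}` for even `d`, `f_d = f_{d-1} + y² f_{d-2}` for odd `d` -/
def fpoly : ℕ → Polynomial ℤ
  | 0 => 1
  | 1 => Polynomial.X + 1
  | n + 2 =>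
    if (n + 2) % 2 = 0 then Polynomial.X * fpoly (n + 1) + fpoly n
    else fpoly (n + 1) + Polynomial.X ^ 2 * fpoly n


namespace StraightAux
open Polynomial

/-- vertical edge at column `k` -/
def V (k : ℕ) : GE := s((((k:ℤ),(0:ℤ)) : GV), (((k:ℤ),(1:ℤ)) : GV))
/-- south edge of tile `i` -/
def S (i : ℕ) : GE := s((((i:ℤ),(0:ℤ)) : GV), (((i:ℤ)+1,(0:ℤ)) : GV))
/-- north edge of tile `i` -/
def N (i : ℕ) : GE := s((((i:ℤ),(1:ℤ)) : GV), (((i:ℤ)+1,(1:ℤ)) : GV))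

lemma south_eq (i : ℕ) : south (((i:ℤ),(0:ℤ)) : GV) = S i := by
  simp [south, S, Prod.ext_iff]
lemma north_eq (i : ℕ) : north (((i:ℤ),(0:ℤ)) : GV) = N i := by
  simp [north, N, Prod.ext_iff]
lemma west_eq (i : ℕ) : west (((i:ℤ),(0:ℤ)) : GV) = V i := by
  simp [west, V, Prod.ext_iff]
lemma east_eq (i : ℕ) : east (((i:ℤ),(0:ℤ)) : GV) = V (i+1) := by
  simp [east, V, Prod.ext_iff]

lemma tileEdges_eq (i : ℕ) :
    tileEdges (((i:ℤ),(0:ℤ)) : GV) = {S i, N i, V i, V (i+1)} := by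
  rw [tileEdges, south_eq, north_eq, west_eq, east_eq]

@[simp] lemma S_eq_S {i j : ℕ} : S i = S j ↔ i = j := by
  constructor
  · intro h; simp only [S, Sym2.eq_iff, Prod.ext_iff] at h; omega
  · rintro rfl; rfl
@[simp] lemma N_eq_N {i j : ℕ} : N i = N j ↔ i = j := by
  constructor
  · intro h; simp only [N, Sym2.eq_iff, Prod.ext_iff] at h; omega
  · rintro rfl; rfl
@[simp] lemma V_eq_V {i j : ℕ} : V i = V j ↔ i = j := by
  constructor
  · intro h; simp only [V, Sym2.eq_iff, Prod.ext_iff] at h; omega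
  · rintro rfl; rfl
@[simp] lemma S_ne_N {i j : ℕ} : S i ≠ N j := by
  intro h; simp only [S, N, Sym2.eq_iff, Prod.ext_iff] at h; omega
@[simp] lemma S_ne_V {i j : ℕ} : S i ≠ V j := by
  intro h; simp only [S, V, Sym2.eq_iff, Prod.ext_iff] at h; omega
@[simp] lemma N_ne_V {i j : ℕ} : N i ≠ V j := by
  intro h; simp only [N, V, Sym2.eq_iff, Prod.ext_iff] at h; omega
@[simp] lemma N_ne_S {i j : ℕ} : N i ≠ S j := fun h => S_ne_N h.symm
@[simp] lemma V_ne_S {i j : ℕ} : V i ≠ S j := fun h => S_ne_V h.symm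
@[simp] lemma V_ne_N {i j : ℕ} : V i ≠ N j := fun h => N_ne_V h.symm

@[simp] lemma bot_mem_S {k i : ℕ} : (((k:ℤ),(0:ℤ)) : GV) ∈ S i ↔ k = i ∨ k = i + 1 := by
  simp [S, Prod.ext_iff]; omega
@[simp] lemma bot_mem_N {k i : ℕ} : ¬ (((k:ℤ),(0:ℤ)) : GV) ∈ N i := by
  simp [N, Prod.ext_iff]
@[simp] lemma bot_mem_V {k m : ℕ} : (((k:ℤ),(0:ℤ)) : GV) ∈ V m ↔ k = m := by
  simp [V, Prod.ext_iff]
@[simp] lemma top_mem_S {k i : ℕ} : ¬ (((k:ℤ),(1:ℤ)) : GV) ∈ S i := by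
  simp [S, Prod.ext_iff]
@[simp] lemma top_mem_N {k i : ℕ} : (((k:ℤ),(1:ℤ)) : GV) ∈ N i ↔ k = i ∨ k = i + 1 := by
  simp [N, Prod.ext_iff]; omega
@[simp] lemma top_mem_V {k m : ℕ} : (((k:ℤ),(1:ℤ)) : GV) ∈ V m ↔ k = m := by
  simp [V, Prod.ext_iff]

@[simp] lemma add10 (i : ℤ) : ((i,(0:ℤ)) : GV) + (1,0) = (i+1, 0) := by
  simp [Prod.ext_iff]
@[simp] lemma add01 (i : ℤ) : ((i,(0:ℤ)) : GV) + (0,1) = (i, 1) := by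
  simp [Prod.ext_iff]
@[simp] lemma add11 (i : ℤ) : ((i,(0:ℤ)) : GV) + (1,1) = (i+1, 1) := by
  simp [Prod.ext_iff]
@[simp] lemma addone (i : ℤ) : ((i,(0:ℤ)) : GV) + 1 = (i+1, 1) := by
  rw [Prod.ext_iff]; constructor <;> simp

lemma tileVerts_eq (i : ℕ) :
    tileVerts (((i:ℤ),(0:ℤ)) : GV) =
      {(((i:ℤ),(0:ℤ)) : GV), (((i:ℤ)+1,(0:ℤ)) : GV), (((i:ℤ),(1:ℤ)) : GV), (((i:ℤ)+1,(1:ℤ)) : GV)} := by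
  simp [tileVerts]

variable {d : ℕ} {hd : 1 ≤ d}

lemma edges_iff {e : GE} :
    e ∈ (straightSnake d hd).edges ↔
      ∃ i < d, e = S i ∨ e = N i ∨ e = V i ∨ e = V (i+1) := by
  simp only [SnakeGraph.edges, straightSnake, Finset.mem_biUnion, Finset.mem_range]
  constructor
  · rintro ⟨i, hi, he⟩
    rw [tileEdges_eq] at he
    simp only [Finset.mem_insert, Finset.mem_singleton] at he
    exact ⟨i, hi, he⟩
  · rintro ⟨i, hi, he⟩
    refine ⟨i, hi, ?_⟩
    rw [tileEdges_eq]
    simp only [Finset.mem_insert, Finset.mem_singleton]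
    exact he

lemma verts_iff {v : GV} :
    v ∈ (straightSnake d hd).verts ↔
      ∃ k ≤ d, v = (((k:ℤ),(0:ℤ)) : GV) ∨ v = (((k:ℤ),(1:ℤ)) : GV) := by
  simp only [SnakeGraph.verts, straightSnake, Finset.mem_biUnion, Finset.mem_range]
  constructor
  · rintro ⟨i, hi, hv⟩
    rw [tileVerts_eq] at hv
    simp only [Finset.mem_insert, Finset.mem_singleton] at hv
    rcases hv with h | h | h | h
    · exact ⟨i, by omega, Or.inl h⟩
    · exact ⟨i+1, by omega, Or.inl (by rw [h]; push_cast; ring_nf)⟩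
    · exact ⟨i, by omega, Or.inr h⟩
    · exact ⟨i+1, by omega, Or.inr (by rw [h]; push_cast; ring_nf)⟩
  · rintro ⟨k, hk, h | h⟩ <;>
    · rcases Nat.lt_or_ge k d with h2 | h2
      · refine ⟨k, h2, ?_⟩
        rw [tileVerts_eq]
        simp [h]
      · have hkd : k = d := by omega
        refine ⟨d - 1, by omega, ?_⟩
        rw [tileVerts_eq]
        have hc : (k : ℤ) = ((d-1 : ℕ) : ℤ) + 1 := by subst hkd; push_cast; omega
        simp [h, hc]

/-- membership set: columns where the matching uses the south (and north) edge -/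
def Dof (d : ℕ) (P : Finset GE) : Finset ℕ := (Finset.range d).filter (fun i => S i ∈ P)

/-- the matching associated to a set of "domino" positions -/
def Mset (d : ℕ) (D : Finset ℕ) : Finset GE :=
  (D.image S) ∪ (D.image N) ∪
    (((Finset.range (d+1)).filter (fun k => k ∉ D ∧ ∀ j ∈ D, j + 1 ≠ k)).image V)

lemma mem_Mset {D : Finset ℕ} {e : GE} :
    e ∈ Mset d D ↔ (∃ i ∈ D, e = S i) ∨ (∃ i ∈ D, e = N i) ∨
      (∃ k, k ≤ d ∧ k ∉ D ∧ (∀ j ∈ D, j + 1 ≠ k) ∧ e = V k) := by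
  simp only [Mset, Finset.mem_union, Finset.mem_image, Finset.mem_filter,
    Finset.mem_range, Nat.lt_succ_iff]
  constructor
  · rintro ((⟨i, hi, rfl⟩ | ⟨i, hi, rfl⟩) | ⟨k, ⟨hk, h1, h2⟩, rfl⟩)
    · exact Or.inl ⟨i, hi, rfl⟩
    · exact Or.inr (Or.inl ⟨i, hi, rfl⟩)
    · exact Or.inr (Or.inr ⟨k, hk, h1, h2, rfl⟩)
  · rintro (⟨i, hi, rfl⟩ | ⟨i, hi, rfl⟩ | ⟨k, hk, h1, h2, rfl⟩)
    · exact Or.inl (Or.inl ⟨i, hi, rfl⟩)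
    · exact Or.inl (Or.inr ⟨i, hi, rfl⟩)
    · exact Or.inr ⟨k, ⟨hk, h1, h2⟩, rfl⟩

section Matching
variable {P : Finset GE}

lemma mem_verts_of_mem_edge {e : GE} {v : GV} (he : e ∈ (straightSnake d hd).edges)
    (hv : v ∈ e) : v ∈ (straightSnake d hd).verts := by
  rw [edges_iff] at he
  rw [verts_iff]
  obtain ⟨i, hi, rfl | rfl | rfl | rfl⟩ := he
  · rcases Sym2.mem_iff.mp hv with rfl | rfl
    · exact ⟨i, by omega, Or.inl rfl⟩
    · exact ⟨i+1, by omega, Or.inl (by push_cast; ring_nf)⟩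
  · rcases Sym2.mem_iff.mp hv with rfl | rfl
    · exact ⟨i, by omega, Or.inr rfl⟩
    · exact ⟨i+1, by omega, Or.inr (by push_cast; ring_nf)⟩
  · rcases Sym2.mem_iff.mp hv with rfl | rfl
    · exact ⟨i, by omega, Or.inl rfl⟩
    · exact ⟨i, by omega, Or.inr rfl⟩
  · rcases Sym2.mem_iff.mp hv with rfl | rfl
    · exact ⟨i+1, by omega, Or.inl rfl⟩
    · exact ⟨i+1, by omega, Or.inr rfl⟩

variable (hP : (straightSnake d hd).IsPerfectMatching P)
include hP

lemma uniqPM {e f : GE} {v : GV} (he : e ∈ P) (hf : f ∈ P) (hve : v ∈ e) (hvf : v ∈ f) :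
    e = f := by
  obtain ⟨g, -, hg⟩ := hP.2 v (mem_verts_of_mem_edge (hP.1 he) hve)
  rw [hg e ⟨he, hve⟩, hg f ⟨hf, hvf⟩]

lemma S_mem_lt {i : ℕ} (h : S i ∈ P) : i < d := by
  have := edges_iff.mp (hP.1 h)
  obtain ⟨j, hj, h1 | h1 | h1 | h1⟩ := this
  · rw [S_eq_S.mp h1]; exact hj
  · exact absurd h1 S_ne_N
  · exact absurd h1 S_ne_V
  · exact absurd h1 S_ne_V

lemma V_mem_le {k : ℕ} (h : V k ∈ P) : k ≤ d := by
  have := edges_iff.mp (hP.1 h)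
  obtain ⟨j, hj, h1 | h1 | h1 | h1⟩ := this
  · exact absurd h1 V_ne_S
  · exact absurd h1 V_ne_N
  · rw [V_eq_V.mp h1]; omega
  · rw [V_eq_V.mp h1]; omega

lemma not_SS {i : ℕ} (h1 : S i ∈ P) (h2 : S (i+1) ∈ P) : False := by
  have : S i = S (i+1) := uniqPM hP h1 h2
    (bot_mem_S.mpr (Or.inr rfl)) (bot_mem_S.mpr (Or.inl rfl))
  simp at this

lemma not_NN {i : ℕ} (h1 : N i ∈ P) (h2 : N (i+1) ∈ P) : False := by
  have : N i = N (i+1) := uniqPM hP h1 h2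
    (top_mem_N.mpr (Or.inr rfl)) (top_mem_N.mpr (Or.inl rfl))
  simp at this

lemma not_SV {i : ℕ} (h1 : S i ∈ P) (h2 : V i ∈ P) : False := by
  have : S i = V i := uniqPM hP h1 h2
    (bot_mem_S.mpr (Or.inl rfl)) (bot_mem_V.mpr rfl)
  simp at this

lemma not_SV' {i : ℕ} (h1 : S i ∈ P) (h2 : V (i+1) ∈ P) : False := by
  have : S i = V (i+1) := uniqPM hP h1 h2
    (bot_mem_S.mpr (Or.inr rfl)) (bot_mem_V.mpr rfl)
  simp at this

lemma not_NV {i : ℕ} (h1 : N i ∈ P) (h2 : V i ∈ P) : False := by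
  have : N i = V i := uniqPM hP h1 h2
    (top_mem_N.mpr (Or.inl rfl)) (top_mem_V.mpr rfl)
  simp at this

lemma not_NV' {i : ℕ} (h1 : N i ∈ P) (h2 : V (i+1) ∈ P) : False := by
  have : N i = V (i+1) := uniqPM hP h1 h2
    (top_mem_N.mpr (Or.inr rfl)) (top_mem_V.mpr rfl)
  simp at this

lemma exists_bot {k : ℕ} (hk : k ≤ d) :
    V k ∈ P ∨ S k ∈ P ∨ (∃ j, j + 1 = k ∧ S j ∈ P) := by
  obtain ⟨e, ⟨heP, hve⟩, -⟩ := hP.2 (((k:ℤ),(0:ℤ)) : GV) (verts_iff.mpr ⟨k, hk, Or.inl rfl⟩)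
  obtain ⟨i, hi, rfl | rfl | rfl | rfl⟩ := edges_iff.mp (hP.1 heP)
  · rcases bot_mem_S.mp hve with rfl | rfl
    · exact Or.inr (Or.inl heP)
    · exact Or.inr (Or.inr ⟨i, rfl, heP⟩)
  · exact absurd hve bot_mem_N
  · obtain rfl : k = i := bot_mem_V.mp hve; exact Or.inl heP
  · obtain rfl : k = i + 1 := bot_mem_V.mp hve; exact Or.inl heP

lemma exists_top {k : ℕ} (hk : k ≤ d) :
    V k ∈ P ∨ N k ∈ P ∨ (∃ j, j + 1 = k ∧ N j ∈ P) := by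
  obtain ⟨e, ⟨heP, hve⟩, -⟩ := hP.2 (((k:ℤ),(1:ℤ)) : GV) (verts_iff.mpr ⟨k, hk, Or.inr rfl⟩)
  obtain ⟨i, hi, rfl | rfl | rfl | rfl⟩ := edges_iff.mp (hP.1 heP)
  · exact absurd hve top_mem_S
  · rcases top_mem_N.mp hve with rfl | rfl
    · exact Or.inr (Or.inl heP)
    · exact Or.inr (Or.inr ⟨i, rfl, heP⟩)
  · obtain rfl : k = i := top_mem_V.mp hve; exact Or.inl heP
  · obtain rfl : k = i + 1 := top_mem_V.mp hve; exact Or.inl heP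

lemma S_iff_N : ∀ i, (S i ∈ P ↔ N i ∈ P) := by
  intro i
  induction i with
  | zero =>
    constructor
    · intro h
      rcases exists_top hP (Nat.zero_le d) with h1 | h1 | ⟨j, hj, h1⟩
      · exact absurd h1 (fun h1 => not_SV hP h h1)
      · exact h1
      · omega
    · intro h
      rcases exists_bot hP (Nat.zero_le d) with h1 | h1 | ⟨j, hj, h1⟩
      · exact absurd h1 (fun h1 => not_NV hP h h1)
      · exact h1
      · omega
  | succ i ih =>
    constructor
    · intro h
      have hd1 : i + 1 ≤ d := le_of_lt (S_mem_lt hP h)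
      rcases exists_top hP hd1 with h1 | h1 | ⟨j, hj, h1⟩
      · exact absurd h1 (fun h1 => not_SV hP h h1)
      · exact h1
      · obtain rfl : j = i := by omega
        exact absurd (ih.mpr h1) (fun h2 => not_SS hP h2 h)
    · intro h
      have hd1 : i + 1 ≤ d := by
        have := edges_iff.mp (hP.1 h)
        obtain ⟨j, hj, h1 | h1 | h1 | h1⟩ := this
        · exact absurd h1 N_ne_S
        · rw [N_eq_N.mp h1]; omega
        · exact absurd h1 N_ne_V
        · exact absurd h1 N_ne_V
      rcases exists_bot hP hd1 with h1 | h1 | ⟨j, hj, h1⟩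
      · exact absurd h1 (fun h1 => not_NV hP h h1)
      · exact h1
      · obtain rfl : j = i := by omega
        exact absurd (ih.mp h1) (fun h2 => not_NN hP h2 h)

lemma Dof_adm : Dof d P ⊆ Finset.range d ∧ ∀ i ∈ Dof d P, i + 1 ∉ Dof d P := by
  constructor
  · exact Finset.filter_subset _ _
  · intro i hi hi1
    rw [Dof, Finset.mem_filter] at hi hi1
    exact not_SS hP hi.2 hi1.2

lemma pm_eq_Mset : P = Mset d (Dof d P) := by
  have hmemD : ∀ i, i ∈ Dof d P ↔ S i ∈ P := by
    intro i
    rw [Dof, Finset.mem_filter, Finset.mem_range]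
    exact ⟨fun h => h.2, fun h => ⟨S_mem_lt hP h, h⟩⟩
  ext e
  rw [mem_Mset]
  constructor
  · intro he
    obtain ⟨i, hi, rfl | rfl | rfl | rfl⟩ := edges_iff.mp (hP.1 he)
    · exact Or.inl ⟨i, (hmemD i).mpr he, rfl⟩
    · exact Or.inr (Or.inl ⟨i, (hmemD i).mpr ((S_iff_N hP i).mpr he), rfl⟩)
    · refine Or.inr (Or.inr ⟨i, by omega, ?_, ?_, rfl⟩)
      · intro hiD
        exact not_SV hP ((hmemD i).mp hiD) he
      · intro j hjD hji
        obtain rfl : j + 1 = i := hji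
        exact not_SV' hP ((hmemD j).mp hjD) he
    · refine Or.inr (Or.inr ⟨i+1, by omega, ?_, ?_, rfl⟩)
      · intro hiD
        exact not_SV hP ((hmemD (i+1)).mp hiD) he
      · intro j hjD hji
        obtain rfl : j = i := by omega
        exact not_SV' hP ((hmemD j).mp hjD) he
  · rintro (⟨i, hi, rfl⟩ | ⟨i, hi, rfl⟩ | ⟨k, hk, h1, h2, rfl⟩)
    · exact (hmemD i).mp hi
    · exact (S_iff_N hP i).mp ((hmemD i).mp hi)
    · rcases exists_bot hP hk with h | h | ⟨j, hj, h⟩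
      · exact h
      · exact absurd ((hmemD k).mpr h) h1
      · exact absurd hj (h2 j ((hmemD j).mpr h))

end Matching

def adm (d : ℕ) : Finset (Finset ℕ) :=
  (Finset.range d).powerset.filter (fun D => ∀ i ∈ D, i + 1 ∉ D)

lemma mem_adm {m : ℕ} {D : Finset ℕ} :
    D ∈ adm m ↔ D ⊆ Finset.range m ∧ ∀ i ∈ D, i + 1 ∉ D := by
  rw [adm, Finset.mem_filter, Finset.mem_powerset]

lemma adm_lt {m : ℕ} {D : Finset ℕ} (hD : D ∈ adm m) {i : ℕ} (hi : i ∈ D) : i < m := by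
  have := (mem_adm.mp hD).1 hi
  rwa [Finset.mem_range] at this

lemma Mset_subset {D : Finset ℕ} (hD : D ∈ adm d) :
    Mset d D ⊆ (straightSnake d hd).edges := by
  intro e he
  rw [edges_iff]
  rcases mem_Mset.mp he with ⟨i, hi, rfl⟩ | ⟨i, hi, rfl⟩ | ⟨k, hk, -, -, rfl⟩
  · exact ⟨i, adm_lt hD hi, Or.inl rfl⟩
  · exact ⟨i, adm_lt hD hi, Or.inr (Or.inl rfl)⟩
  · rcases Nat.lt_or_ge k d with h | h
    · exact ⟨k, h, Or.inr (Or.inr (Or.inl rfl))⟩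
    · have hkd : k = d := by omega
      refine ⟨d - 1, by omega, Or.inr (Or.inr (Or.inr ?_))⟩
      rw [show d - 1 + 1 = k by omega]

lemma Mset_isPM {D : Finset ℕ} (hD : D ∈ adm d) :
    (straightSnake d hd).IsPerfectMatching (Mset d D) := by
  refine ⟨Mset_subset hD, ?_⟩
  intro v hv
  obtain ⟨k, hk, rfl | rfl⟩ := verts_iff.mp hv
  · -- bottom vertex (k, 0)
    by_cases hk1 : k ∈ D
    · refine ⟨S k, ⟨mem_Mset.mpr (Or.inl ⟨k, hk1, rfl⟩), bot_mem_S.mpr (Or.inl rfl)⟩, ?_⟩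
      rintro f ⟨hf, hvf⟩
      rcases mem_Mset.mp hf with ⟨i, hi, rfl⟩ | ⟨i, hi, rfl⟩ | ⟨m, hm, hm1, hm2, rfl⟩
      · rcases bot_mem_S.mp hvf with rfl | rfl
        · rfl
        · exact absurd hk1 ((mem_adm.mp hD).2 i hi)
      · exact absurd hvf bot_mem_N
      · obtain rfl := bot_mem_V.mp hvf
        exact absurd hk1 hm1
    · by_cases hk2 : ∃ j ∈ D, j + 1 = k
      · obtain ⟨j, hj, rfl⟩ := hk2
        refine ⟨S j, ⟨mem_Mset.mpr (Or.inl ⟨j, hj, rfl⟩), bot_mem_S.mpr (Or.inr rfl)⟩, ?_⟩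
        rintro f ⟨hf, hvf⟩
        rcases mem_Mset.mp hf with ⟨i, hi, rfl⟩ | ⟨i, hi, rfl⟩ | ⟨m, hm, hm1, hm2, rfl⟩
        · rcases bot_mem_S.mp hvf with h | h
          · exact absurd (h ▸ hi) hk1
          · obtain rfl : i = j := by omega
            rfl
        · exact absurd hvf bot_mem_N
        · obtain rfl := bot_mem_V.mp hvf
          exact absurd rfl (hm2 j hj)
      · push_neg at hk2
        refine ⟨V k, ⟨mem_Mset.mpr (Or.inr (Or.inr ⟨k, hk, hk1, hk2, rfl⟩)),
          bot_mem_V.mpr rfl⟩, ?_⟩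
        rintro f ⟨hf, hvf⟩
        rcases mem_Mset.mp hf with ⟨i, hi, rfl⟩ | ⟨i, hi, rfl⟩ | ⟨m, hm, hm1, hm2, rfl⟩
        · rcases bot_mem_S.mp hvf with rfl | rfl
          · exact absurd hi hk1
          · exact absurd rfl (hk2 i hi)
        · exact absurd hvf bot_mem_N
        · obtain rfl := bot_mem_V.mp hvf
          rfl
  · -- top vertex (k, 1)
    by_cases hk1 : k ∈ D
    · refine ⟨N k, ⟨mem_Mset.mpr (Or.inr (Or.inl ⟨k, hk1, rfl⟩)), top_mem_N.mpr (Or.inl rfl)⟩, ?_⟩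
      rintro f ⟨hf, hvf⟩
      rcases mem_Mset.mp hf with ⟨i, hi, rfl⟩ | ⟨i, hi, rfl⟩ | ⟨m, hm, hm1, hm2, rfl⟩
      · exact absurd hvf top_mem_S
      · rcases top_mem_N.mp hvf with rfl | rfl
        · rfl
        · exact absurd hk1 ((mem_adm.mp hD).2 i hi)
      · obtain rfl := top_mem_V.mp hvf
        exact absurd hk1 hm1
    · by_cases hk2 : ∃ j ∈ D, j + 1 = k
      · obtain ⟨j, hj, rfl⟩ := hk2
        refine ⟨N j, ⟨mem_Mset.mpr (Or.inr (Or.inl ⟨j, hj, rfl⟩)), top_mem_N.mpr (Or.inr rfl)⟩, ?_⟩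
        rintro f ⟨hf, hvf⟩
        rcases mem_Mset.mp hf with ⟨i, hi, rfl⟩ | ⟨i, hi, rfl⟩ | ⟨m, hm, hm1, hm2, rfl⟩
        · exact absurd hvf top_mem_S
        · rcases top_mem_N.mp hvf with h | h
          · exact absurd (h ▸ hi) hk1
          · obtain rfl : i = j := by omega
            rfl
        · obtain rfl := top_mem_V.mp hvf
          exact absurd rfl (hm2 j hj)
      · push_neg at hk2
        refine ⟨V k, ⟨mem_Mset.mpr (Or.inr (Or.inr ⟨k, hk, hk1, hk2, rfl⟩)),
          top_mem_V.mpr rfl⟩, ?_⟩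
        rintro f ⟨hf, hvf⟩
        rcases mem_Mset.mp hf with ⟨i, hi, rfl⟩ | ⟨i, hi, rfl⟩ | ⟨m, hm, hm1, hm2, rfl⟩
        · exact absurd hvf top_mem_S
        · rcases top_mem_N.mp hvf with rfl | rfl
          · exact absurd hi hk1
          · exact absurd rfl (hk2 i hi)
        · obtain rfl := top_mem_V.mp hvf
          rfl

lemma Dof_Mset {D : Finset ℕ} (hD : D ⊆ Finset.range d) : Dof d (Mset d D) = D := by
  ext i
  rw [Dof, Finset.mem_filter, Finset.mem_range]
  constructor
  · rintro ⟨hi, hS⟩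
    rcases mem_Mset.mp hS with ⟨j, hj, h⟩ | ⟨j, hj, h⟩ | ⟨m, hm, h1, h2, h⟩
    · obtain rfl := S_eq_S.mp h
      exact hj
    · exact absurd h S_ne_N
    · exact absurd h S_ne_V
  · intro hi
    have := hD hi
    rw [Finset.mem_range] at this
    exact ⟨this, mem_Mset.mpr (Or.inl ⟨i, hi, rfl⟩)⟩

lemma Dof_mem_adm {P : Finset GE} (hP : (straightSnake d hd).IsPerfectMatching P) :
    Dof d P ∈ adm d := by
  rw [mem_adm]
  exact ⟨(Dof_adm hP).1, (Dof_adm hP).2⟩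

lemma matchings_eq :
    (straightSnake d hd).matchings = (adm d).image (Mset d) := by
  ext P
  rw [SnakeGraph.matchings, Finset.mem_filter, Finset.mem_powerset, Finset.mem_image]
  constructor
  · rintro ⟨-, hP⟩
    exact ⟨Dof d P, Dof_mem_adm hP, (pm_eq_Mset hP).symm⟩
  · rintro ⟨D, hD, rfl⟩
    exact ⟨Mset_subset hD, Mset_isPM hD⟩

def odds (m : ℕ) : Finset ℕ := (Finset.range m).filter (fun i => i % 2 = 1)

lemma mem_odds {m i : ℕ} : i ∈ odds m ↔ i < m ∧ i % 2 = 1 := by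
  rw [odds, Finset.mem_filter, Finset.mem_range]

lemma pos_eq (i : ℕ) : (straightSnake d hd).pos i = (((i:ℤ),(0:ℤ)) : GV) := rfl

lemma S_eq_hEdge {i : ℕ} : S i = hEdge (i:ℤ) 0 := rfl

lemma encl_iff {P Q : Finset GE} (hPe : P ⊆ (straightSnake d hd).edges)
    (hQe : Q ⊆ (straightSnake d hd).edges) (i : ℕ) :
    (straightSnake d hd).encl P Q i ↔ S i ∈ symmDiff P Q := by
  rw [SnakeGraph.encl]
  have hfe : ∀ e ∈ symmDiff P Q, e ∈ (straightSnake d hd).edges := by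
    intro e he
    rw [Finset.mem_symmDiff] at he
    rcases he with ⟨h, -⟩ | ⟨h, -⟩
    · exact hPe h
    · exact hQe h
  have hfilter : (symmDiff P Q).filter
      (fun e => ∃ j : ℤ, j ≤ ((straightSnake d hd).pos i).2 ∧
        e = hEdge ((straightSnake d hd).pos i).1 j) =
      (symmDiff P Q).filter (fun e => e = S i) := by
    apply Finset.filter_congr
    intro e he
    simp only [pos_eq]
    constructor
    · rintro ⟨j, hj, hej⟩
      obtain ⟨i', hi', h | h | h | h⟩ := edges_iff.mp (hfe _ he)
      · subst h
        have h2 : (i' : ℤ) = (i : ℤ) ∧ j = 0 := by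
          simp only [S, hEdge, Sym2.eq_iff, Prod.ext_iff] at hej
          omega
        have h3 : i' = i := by exact_mod_cast h2.1
        rw [h3]
      · exfalso; subst h
        simp only [N, hEdge, Sym2.eq_iff, Prod.ext_iff] at hej; omega
      · exfalso; subst h
        simp only [V, hEdge, Sym2.eq_iff, Prod.ext_iff] at hej; omega
      · exfalso; subst h
        simp only [V, hEdge, Sym2.eq_iff, Prod.ext_iff] at hej; omega
    · rintro rfl
      exact ⟨0, le_refl 0, rfl⟩
  rw [hfilter, Finset.filter_eq']
  by_cases h : S i ∈ symmDiff P Q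
  · simp [h]
  · simp [h]

lemma rank_eq {P Q : Finset GE} (hPe : P ⊆ (straightSnake d hd).edges)
    (hQe : Q ⊆ (straightSnake d hd).edges) :
    (straightSnake d hd).rank Q P = (symmDiff (Dof d P) (Dof d Q)).card := by
  rw [SnakeGraph.rank]
  have h1 : (Finset.range (straightSnake d hd).d).filter
      (fun i => (straightSnake d hd).encl P Q i) =
      symmDiff (Dof d P) (Dof d Q) := by
    ext i
    rw [Finset.mem_filter]
    have hdd : (straightSnake d hd).d = d := rfl
    rw [hdd, Finset.mem_range]
    constructor
    · rintro ⟨hi, he⟩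
      rw [encl_iff hPe hQe, Finset.mem_symmDiff] at he
      rw [Finset.mem_symmDiff]
      simp only [Dof, Finset.mem_filter, Finset.mem_range]
      tauto
    · intro hi
      rw [Finset.mem_symmDiff] at hi
      simp only [Dof, Finset.mem_filter, Finset.mem_range] at hi
      have hid : i < d := by tauto
      refine ⟨hid, ?_⟩
      rw [encl_iff hPe hQe, Finset.mem_symmDiff]
      tauto
  rw [h1]

lemma V_interior {k : ℕ} (h0 : 0 < k) (hk : k < d) :
    V k ∈ (straightSnake d hd).interiorEdges := by
  rw [SnakeGraph.interiorEdges, Finset.mem_filter]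
  refine ⟨edges_iff.mpr ⟨k, hk, Or.inr (Or.inr (Or.inl rfl))⟩, k - 1,
    (show k - 1 < d by omega), k, hk, (show k - 1 ≠ k by omega), ?_, ?_⟩
  · rw [pos_eq, tileEdges_eq, show k - 1 + 1 = k from by omega]
    simp
  · rw [pos_eq, tileEdges_eq]
    simp

lemma Pm_Dof_odds {Pm : Finset GE} (hPm : (straightSnake d hd).IsPerfectMatching Pm)
    (hPmb : Pm ⊆ (straightSnake d hd).boundaryEdges) (hw : V 0 ∈ Pm) :
    Dof d Pm = odds d := by
  have main : ∀ i, (S i ∈ Pm ↔ i < d ∧ i % 2 = 1) := by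
    intro i
    induction i with
    | zero =>
      constructor
      · intro h
        exact absurd hw (fun hV => not_SV hPm h hV)
      · rintro ⟨-, h⟩
        omega
    | succ i ih =>
      by_cases hlt : i + 1 < d
      · have hVint : V (i+1) ∉ Pm := by
          intro hV
          have := hPmb hV
          rw [SnakeGraph.boundaryEdges, Finset.mem_sdiff] at this
          exact this.2 (V_interior (by omega) hlt)
        constructor
        · intro h
          refine ⟨hlt, ?_⟩
          by_contra hpar
          have hSi : S i ∈ Pm := ih.mpr ⟨by omega, by omega⟩
          exact not_SS hPm hSi h
        · rintro ⟨-, hpar⟩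
          rcases exists_bot hPm (le_of_lt hlt) with h | h | ⟨j, hj, h⟩
          · exact absurd h hVint
          · exact h
          · obtain rfl : j = i := by omega
            have := ih.mp h
            omega
      · constructor
        · intro h
          exact absurd (S_mem_lt hPm h) hlt
        · rintro ⟨h, -⟩
          exact absurd h hlt
  ext i
  rw [Dof, Finset.mem_filter, Finset.mem_range, mem_odds, main i]
  tauto

section Comb
open Polynomial

lemma adm_decomp (n : ℕ) :
    adm (n+2) = adm (n+1) ∪ (adm n).image (insert (n+1)) := by
  ext D
  simp only [Finset.mem_union, Finset.mem_image, mem_adm]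
  constructor
  · rintro ⟨hsub, hcons⟩
    by_cases h : n + 1 ∈ D
    · right
      refine ⟨D.erase (n+1), ⟨?_, ?_⟩, Finset.insert_erase h⟩
      · intro x hx
        rw [Finset.mem_erase] at hx
        have hx2 := hsub hx.2
        rw [Finset.mem_range] at hx2 ⊢
        have hxn : x ≠ n := by
          rintro rfl
          exact hcons x hx.2 h
        omega
      · intro i hi hi1
        rw [Finset.mem_erase] at hi hi1
        exact hcons i hi.2 hi1.2
    · left
      refine ⟨?_, hcons⟩
      intro x hx
      have hx2 := hsub hx
      rw [Finset.mem_range] at hx2 ⊢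
      have : x ≠ n + 1 := by
        rintro rfl
        exact h hx
      omega
  · rintro (⟨hsub, hcons⟩ | ⟨D', ⟨hsub, hcons⟩, rfl⟩)
    · refine ⟨hsub.trans (Finset.range_subset_range.mpr (by omega)), hcons⟩
    · constructor
      · intro x hx
        rw [Finset.mem_insert] at hx
        rw [Finset.mem_range]
        rcases hx with rfl | hx
        · omega
        · have := hsub hx
          rw [Finset.mem_range] at this
          omega
      · intro i hi hi1
        rw [Finset.mem_insert] at hi hi1
        rcases hi with rfl | hi
        · rcases hi1 with h | h
          · omega
          · have := hsub h
            rw [Finset.mem_range] at this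
            omega
        · rcases hi1 with h | h
          · have := hsub hi
            rw [Finset.mem_range] at this
            omega
          · exact hcons i hi h

lemma adm_disj (n : ℕ) :
    Disjoint (adm (n+1)) ((adm n).image (insert (n+1))) := by
  rw [Finset.disjoint_left]
  rintro D hD hD2
  rw [Finset.mem_image] at hD2
  obtain ⟨D', -, rfl⟩ := hD2
  have := adm_lt hD (Finset.mem_insert_self (n+1) D')
  omega

lemma adm_insert_injOn (n : ℕ) : ∀ D ∈ adm n, ∀ D' ∈ adm n,
    insert (n+1) D = insert (n+1) D' → D = D' := by
  intro D hD D' hD' h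
  have h1 : n + 1 ∉ D := fun hm => by have := adm_lt hD hm; omega
  have h2 : n + 1 ∉ D' := fun hm => by have := adm_lt hD' hm; omega
  rw [← Finset.erase_insert h1, ← Finset.erase_insert h2, h]

lemma symmDiff_insert_left {A B : Finset ℕ} {a : ℕ} (ha : a ∉ A) (hb : a ∉ B) :
    symmDiff (insert a A) B = insert a (symmDiff A B) := by
  ext x
  by_cases hx : x = a
  · subst hx
    simp [Finset.mem_symmDiff, ha, hb]
  · simp only [Finset.mem_symmDiff, Finset.mem_insert, hx, false_or]

lemma symmDiff_insert_right {A B : Finset ℕ} {a : ℕ} (ha : a ∉ A) (hb : a ∉ B) :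
    symmDiff A (insert a B) = insert a (symmDiff A B) := by
  rw [symmDiff_comm, symmDiff_insert_left hb ha, symmDiff_comm]

lemma symmDiff_insert_insert {A B : Finset ℕ} {a : ℕ} (ha : a ∉ A) (hb : a ∉ B) :
    symmDiff (insert a A) (insert a B) = symmDiff A B := by
  ext x
  by_cases hx : x = a
  · subst hx
    simp [Finset.mem_symmDiff, ha, hb]
  · simp only [Finset.mem_symmDiff, Finset.mem_insert, hx, false_or]

lemma notMem_symmDiff {A B : Finset ℕ} {a : ℕ} (ha : a ∉ A) (hb : a ∉ B) :
    a ∉ symmDiff A B := by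
  simp [Finset.mem_symmDiff, ha, hb]

lemma card_symmDiff_insert_right {A B : Finset ℕ} {a : ℕ} (ha : a ∉ A) (hb : a ∉ B) :
    (symmDiff A (insert a B)).card = (symmDiff A B).card + 1 := by
  rw [symmDiff_insert_right ha hb, Finset.card_insert_of_notMem (notMem_symmDiff ha hb)]

lemma odds_succ_odd {n : ℕ} (h : n % 2 = 1) : odds (n+1) = insert n (odds n) := by
  rw [odds, odds, Finset.range_add_one, Finset.filter_insert, if_pos h]

lemma odds_succ_even {n : ℕ} (h : n % 2 = 0) : odds (n+1) = odds n := by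
  rw [odds, odds, Finset.range_add_one, Finset.filter_insert, if_neg (by omega)]

lemma notMem_odds {k m : ℕ} (h : k % 2 = 0 ∨ m ≤ k) : k ∉ odds m := by
  rw [mem_odds]
  omega

lemma adm_zero : adm 0 = {∅} := by
  rw [adm, Finset.range_zero, Finset.powerset_empty, Finset.filter_singleton, if_pos]
  intro i hi
  simp at hi

lemma adm_one : adm 1 = {∅, {0}} := by
  ext D
  rw [mem_adm]
  constructor
  · rintro ⟨hsub, -⟩
    rw [Finset.range_one, Finset.subset_singleton_iff] at hsub
    simpa using hsub
  · intro h
    simp only [Finset.mem_insert, Finset.mem_singleton] at h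
    rcases h with rfl | rfl
    · exact ⟨Finset.empty_subset _, by simp⟩
    · refine ⟨by rw [Finset.range_one], by simp⟩

lemma odds_zero : odds 0 = ∅ := rfl

lemma odds_one : odds 1 = ∅ := by
  rw [odds_succ_even (by norm_num), odds_zero]

lemma gf : ∀ m : ℕ, ∑ D ∈ adm m, (X : Polynomial ℤ) ^ (symmDiff D (odds m)).card = fpoly m := by
  intro m
  induction m using Nat.strong_induction_on with
  | _ m ih =>
    match m with
    | 0 =>
      rw [adm_zero, odds_zero, fpoly]
      simp
    | 1 =>
      rw [adm_one, odds_one, fpoly]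
      rw [Finset.sum_insert (by decide), Finset.sum_singleton]
      have e1 : symmDiff (∅ : Finset ℕ) ∅ = ∅ := by simp
      have e2 : symmDiff ({0} : Finset ℕ) ∅ = {0} := by simp
      rw [e1, e2]
      norm_num
      ring
    | (n+2) =>
      rw [adm_decomp n, Finset.sum_union (adm_disj n), Finset.sum_image (adm_insert_injOn n)]
      have hsum1 := ih (n+1) (by omega)
      have hsum2 := ih n (by omega)
      rcases Nat.even_or_odd n with he | ho
      · -- n even, n+1 odd, n+2 even
        have hn : n % 2 = 0 := Nat.even_iff.mp he
        have hodds2 : odds (n+2) = insert (n+1) (odds (n+1)) := odds_succ_odd (by omega)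
        have hodds1 : odds (n+1) = odds n := odds_succ_even hn
        have t1 : ∑ D ∈ adm (n+1), (X : Polynomial ℤ) ^ (symmDiff D (odds (n+2))).card =
            X * fpoly (n+1) := by
          rw [← hsum1, Finset.mul_sum]
          apply Finset.sum_congr rfl
          intro D hD
          have hnD : n + 1 ∉ D := fun hm => by have := adm_lt hD hm; omega
          have hnO : n + 1 ∉ odds (n+1) := notMem_odds (Or.inr (le_refl _))
          rw [hodds2, card_symmDiff_insert_right hnD hnO, pow_succ]
          ring
        have t2 : ∑ D ∈ adm n, (X : Polynomial ℤ) ^ (symmDiff (insert (n+1) D) (odds (n+2))).card =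
            fpoly n := by
          rw [← hsum2]
          apply Finset.sum_congr rfl
          intro D hD
          have hnD : n + 1 ∉ D := fun hm => by have := adm_lt hD hm; omega
          have hnO : n + 1 ∉ odds (n+1) := notMem_odds (Or.inr (le_refl _))
          rw [hodds2, symmDiff_insert_insert hnD hnO, hodds1]
        rw [t1, t2, fpoly]
        rw [if_pos (by omega)]
      · -- n odd, n+1 even, n+2 odd
        have hn : n % 2 = 1 := Nat.odd_iff.mp ho
        have hodds2 : odds (n+2) = odds (n+1) := odds_succ_even (by omega)
        have hodds1 : odds (n+1) = insert n (odds n) := odds_succ_odd hn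
        have t1 : ∑ D ∈ adm (n+1), (X : Polynomial ℤ) ^ (symmDiff D (odds (n+2))).card =
            fpoly (n+1) := by
          rw [← hsum1, hodds2]
        have t2 : ∑ D ∈ adm n, (X : Polynomial ℤ) ^ (symmDiff (insert (n+1) D) (odds (n+2))).card =
            X ^ 2 * fpoly n := by
          rw [← hsum2, Finset.mul_sum]
          apply Finset.sum_congr rfl
          intro D hD
          have hnD : n + 1 ∉ D := fun hm => by have := adm_lt hD hm; omega
          have hnD' : n ∉ D := fun hm => by have := adm_lt hD hm; omega
          have hnO : n + 1 ∉ odds (n+1) := notMem_odds (Or.inr (le_refl _))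
          have hnO' : n ∉ odds n := notMem_odds (Or.inr (le_refl _))
          have hnO2 : n + 1 ∉ odds n := notMem_odds (Or.inr (by omega))
          have hmem : n + 1 ∉ symmDiff D (insert n (odds n)) := by
            rw [symmDiff_insert_right hnD' hnO']
            simp only [Finset.mem_insert]
            push_neg
            exact ⟨by omega, notMem_symmDiff hnD hnO2⟩
          rw [hodds2, symmDiff_insert_left hnD hnO, hodds1,
            Finset.card_insert_of_notMem hmem,
            card_symmDiff_insert_right hnD' hnO', pow_succ, pow_succ]
          ring
        rw [t1, t2, fpoly]
        rw [if_neg (by omega)]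

lemma fpoly_eval : ∀ m : ℕ, (fpoly m).eval 1 = (Nat.fib (m+2) : ℤ) := by
  intro m
  induction m using Nat.strong_induction_on with
  | _ m ih =>
    match m with
    | 0 => simp [fpoly]
    | 1 =>
      rw [fpoly]
      simp [Nat.fib_add_two]
    | (n+2) =>
      have h1 := ih (n+1) (by omega)
      have h2 := ih n (by omega)
      rw [show n + 1 + 2 = n + 3 from by omega] at h1
      have hfib : Nat.fib (n + 2 + 2) = Nat.fib (n + 2) + Nat.fib (n + 3) := Nat.fib_add_two
      rw [fpoly]
      rcases Nat.even_or_odd n with he | ho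
      · rw [if_pos (by have := Nat.even_iff.mp he; omega : (n+2) % 2 = 0)]
        simp only [Polynomial.eval_add, Polynomial.eval_mul, Polynomial.eval_X, h1, h2]
        rw [hfib]
        push_cast
        ring
      · rw [if_neg (by have := Nat.odd_iff.mp ho; omega)]
        simp only [Polynomial.eval_add, Polynomial.eval_mul, Polynomial.eval_pow,
          Polynomial.eval_X, h1, h2, one_pow]
        rw [hfib]
        push_cast
        ring

end Comb

end StraightAux

/-- `f_d` is the rank generating function of the lattice of
perfect matchings of the straight snake graph with `d` tiles whose first
interior edge has sign `+` (equivalently, whose minimal matching `Pm`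
contains the west edge of the first tile); in particular `f_d(1) = fib (d+2)`. -/
theorem straight_rank_generating_function (d : ℕ) (hd : 1 ≤ d)
    (Pm : Finset GE) (hPm : (straightSnake d hd).IsPerfectMatching Pm)
    (hPmb : Pm ⊆ (straightSnake d hd).boundaryEdges)
    (hw : west ((0 : ℤ), (0 : ℤ)) ∈ Pm) :
    (fpoly d = ∑ i ∈ Finset.range (d + 1),
        (((straightSnake d hd).matchings.filter
            fun P => (straightSnake d hd).rank Pm P = i).card : Polynomial ℤ) *
          Polynomial.X ^ i) ∧
    (fpoly d).eval 1 = (Nat.fib (d + 2) : ℤ) := by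
  classical
  constructor
  · have hw' : StraightAux.V 0 ∈ Pm := by
      have he : west ((0:ℤ),(0:ℤ)) = StraightAux.V 0 := by
        simp [west, StraightAux.V, Prod.ext_iff]
      rwa [he] at hw
    have hDPm : StraightAux.Dof d Pm = StraightAux.odds d :=
      StraightAux.Pm_Dof_odds hPm hPmb hw'
    have hPmE : Pm ⊆ (straightSnake d hd).edges := hPm.1
    have hinj : ∀ D ∈ StraightAux.adm d, ∀ D' ∈ StraightAux.adm d,
        StraightAux.Mset d D = StraightAux.Mset d D' → D = D' := by
      intro D hD D' hD' h
      have := congrArg (StraightAux.Dof d) h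
      rwa [StraightAux.Dof_Mset (StraightAux.mem_adm.mp hD).1,
        StraightAux.Dof_Mset (StraightAux.mem_adm.mp hD').1] at this
    have step1 : (fpoly d) = ∑ P ∈ (straightSnake d hd).matchings,
        (Polynomial.X : Polynomial ℤ) ^ ((straightSnake d hd).rank Pm P) := by
      rw [StraightAux.matchings_eq, Finset.sum_image hinj, ← StraightAux.gf d]
      apply Finset.sum_congr rfl
      intro D hD
      rw [StraightAux.rank_eq (StraightAux.Mset_subset hD) hPmE,
        StraightAux.Dof_Mset (StraightAux.mem_adm.mp hD).1, hDPm]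
    have hmaps : ∀ P ∈ (straightSnake d hd).matchings,
        (straightSnake d hd).rank Pm P ∈ Finset.range (d + 1) := by
      intro P _
      rw [Finset.mem_range]
      have h1 : (straightSnake d hd).rank Pm P ≤ d := by
        rw [SnakeGraph.rank]
        calc ((Finset.range (straightSnake d hd).d).filter
            fun i => (straightSnake d hd).encl P Pm i).card
            ≤ (Finset.range (straightSnake d hd).d).card := Finset.card_filter_le _ _
          _ = d := Finset.card_range d
      omega
    rw [step1, ← Finset.sum_fiberwise_of_maps_to hmaps
      (fun P => (Polynomial.X : Polynomial ℤ) ^ ((straightSnake d hd).rank Pm P))]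
    apply Finset.sum_congr rfl
    intro i hi
    have hin : ∑ P ∈ (straightSnake d hd).matchings.filter
        (fun P => (straightSnake d hd).rank Pm P = i),
        (Polynomial.X : Polynomial ℤ) ^ ((straightSnake d hd).rank Pm P) =
        ∑ _P ∈ (straightSnake d hd).matchings.filter
        (fun P => (straightSnake d hd).rank Pm P = i),
        (Polynomial.X : Polynomial ℤ) ^ i := by
      apply Finset.sum_congr rfl
      intro P hP
      rw [(Finset.mem_filter.mp hP).2]
    rw [hin, Finset.sum_const, nsmul_eq_mul]
  · exact StraightAux.fpoly_eval d
end
end
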